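/- arXiv:2202.12647 — 9 statements merged into one kernel-verified Lean document; each statement's English description precedes it below -/
import Mathlib

section
/- Let X and Y be normed linear spaces over F (ℝ or ℂ), and let T, A be bounded linear operators from X to Y. Then the set Ω(T,A) := { λ ∈ F : there exist sequences (xₙ) in the unit sphere of X and (yₙ*) in the unit sphere of Y* such that yₙ*(T xₙ) → ‖T‖ and yₙ*(A xₙ) → λ } is a compact subset of F. -/
open Filter Topology

theorem stmt0 {𝕜 X Y : Type*} [RCLike 𝕜] [NormedAddCommGroup X] [NormedSpace 𝕜 X]
    [NormedAddCommGroup Y] [NormedSpace 𝕜 Y] (T A : X →L[𝕜] Y) :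
    IsCompact {lam : 𝕜 | ∃ (x : ℕ → X) (y : ℕ → (Y →L[𝕜] 𝕜)),
      (∀ n, ‖x n‖ = 1) ∧ (∀ n, ‖y n‖ = 1) ∧
      Tendsto (fun n => y n (T (x n))) atTop (𝓝 (‖T‖ : 𝕜)) ∧
      Tendsto (fun n => y n (A (x n))) atTop (𝓝 lam)} := by
  set S := {lam : 𝕜 | ∃ (x : ℕ → X) (y : ℕ → (Y →L[𝕜] 𝕜)),
      (∀ n, ‖x n‖ = 1) ∧ (∀ n, ‖y n‖ = 1) ∧
      Tendsto (fun n => y n (T (x n))) atTop (𝓝 (‖T‖ : 𝕜)) ∧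
      Tendsto (fun n => y n (A (x n))) atTop (𝓝 lam)} with hSdef
  have hsub : S ⊆ Metric.closedBall (0 : 𝕜) ‖A‖ := by
    rintro lam ⟨x, y, hx, hy, hT, hA⟩
    have hb : ∀ n, ‖y n (A (x n))‖ ≤ ‖A‖ := by
      intro n
      calc ‖y n (A (x n))‖ ≤ ‖y n‖ * ‖A (x n)‖ := (y n).le_opNorm _
        _ ≤ 1 * (‖A‖ * ‖x n‖) := by
            rw [hy n]; gcongr; exact A.le_opNorm _
        _ = ‖A‖ := by rw [hx n]; ring
    have hlim : Tendsto (fun n => ‖y n (A (x n))‖) atTop (𝓝 ‖lam‖) := hA.norm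
    have : ‖lam‖ ≤ ‖A‖ := le_of_tendsto' hlim hb
    simpa [Metric.mem_closedBall, dist_eq_norm] using this
  have hclosed : IsClosed S := by
    apply IsSeqClosed.isClosed
    intro l lam hl hlim
    choose x y hx hy hT hA using hl
    have hchoice : ∀ k : ℕ, ∃ N, ‖y k N (T (x k N)) - (‖T‖ : 𝕜)‖ < 1/(k+1) ∧
        ‖y k N (A (x k N)) - l k‖ < 1/(k+1) := by
      intro k
      obtain ⟨N1, h1⟩ := Metric.tendsto_atTop.mp (hT k) (1/(k+1)) (by positivity)
      obtain ⟨N2, h2⟩ := Metric.tendsto_atTop.mp (hA k) (1/(k+1)) (by positivity)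
      exact ⟨max N1 N2,
        by simpa [dist_eq_norm] using h1 _ (le_max_left _ _),
        by simpa [dist_eq_norm] using h2 _ (le_max_right _ _)⟩
    choose N hN1 hN2 using hchoice
    refine ⟨fun k => x k (N k), fun k => y k (N k), fun k => hx k (N k),
      fun k => hy k (N k), ?_, ?_⟩
    · rw [tendsto_iff_norm_sub_tendsto_zero]
      exact squeeze_zero (fun k => norm_nonneg _) (fun k => (hN1 k).le)
        tendsto_one_div_add_atTop_nhds_zero_nat
    · rw [tendsto_iff_norm_sub_tendsto_zero]
      have hll : Tendsto (fun k => ‖l k - lam‖) atTop (𝓝 0) :=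
        tendsto_iff_norm_sub_tendsto_zero.mp hlim
      have hsum : Tendsto (fun k : ℕ => 1/(k+1 : ℝ) + ‖l k - lam‖) atTop (𝓝 0) := by
        simpa using tendsto_one_div_add_atTop_nhds_zero_nat.add hll
      refine squeeze_zero (fun k => norm_nonneg _) (fun k => ?_) hsum
      calc ‖y k (N k) (A (x k (N k))) - lam‖
          ≤ ‖y k (N k) (A (x k (N k))) - l k‖ + ‖l k - lam‖ := norm_sub_le_norm_sub_add_norm_sub _ _ _
        _ ≤ 1/(k+1) + ‖l k - lam‖ := by gcongr; exact (hN2 k).le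
  exact Metric.isCompact_of_isClosed_isBounded hclosed
    (Metric.isBounded_closedBall.subset hsub)
end

section
/- Let X and Y be normed linear spaces over F (ℝ or ℂ), and let T, A be nonzero bounded linear operators from X to Y. Then T is Birkhoff-James orthogonal to A (i.e., ‖T + λA‖ ≥ ‖T‖ for all scalars λ) if and only if 0 belongs to the convex hull of the set Ω(T,A) := { λ ∈ F : there exist sequences (xₙ) in S_X and (yₙ*) in S_{Y*} with yₙ*(T xₙ) → ‖T‖ and yₙ*(A xₙ) → λ }. -/
open Filter Topology Set

lemma my_sum_extend {ι κ M : Type*} [Fintype ι] [Fintype κ] [AddCommMonoid M]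
    (e : ι ↪ κ) (F : κ → M) (hF : ∀ j, (¬∃ i, e i = j) → F j = 0) :
    ∑ j, F j = ∑ i, F (e i) := by
  rw [← Finset.sum_map Finset.univ e F]
  apply (Finset.sum_subset (Finset.subset_univ _) _).symm
  intro j _ hj
  apply hF
  rintro ⟨i, rfl⟩
  exact hj (Finset.mem_map_of_mem e (Finset.mem_univ i))

lemma my_isCompact_convexHull {E : Type*} [NormedAddCommGroup E] [NormedSpace ℝ E]
    [FiniteDimensional ℝ E] {s : Set E} (hs : IsCompact s) : IsCompact (convexHull ℝ s) := by
  classical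
  rcases s.eq_empty_or_nonempty with rfl | ⟨p₀, hp₀⟩
  · simp
  set d := Module.finrank ℝ E + 1 with hd
  set f : (Fin d → ℝ) × (Fin d → E) → E := fun p => ∑ i, p.1 i • p.2 i with hf
  have hfc : Continuous f := by
    apply continuous_finset_sum
    intro i _
    exact ((continuous_apply i).comp continuous_fst).smul
      ((continuous_apply i).comp continuous_snd)
  have hK : IsCompact ((stdSimplex ℝ (Fin d)) ×ˢ (Set.pi Set.univ fun _ : Fin d => s)) :=
    (isCompact_stdSimplex ℝ (Fin d)).prod (isCompact_univ_pi fun _ => hs)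
  have himage : convexHull ℝ s = f '' ((stdSimplex ℝ (Fin d)) ×ˢ (Set.pi Set.univ fun _ : Fin d => s)) := by
    apply Subset.antisymm
    · intro x hx
      obtain ⟨ι, hι, z, w, hzs, hindep, hwpos, hwsum, hwz⟩ :=
        eq_pos_convex_span_of_mem_convexHull hx
      have hcard : Fintype.card ι ≤ d :=
        hindep.card_le_finrank_succ.trans (by
          have := Submodule.finrank_le (vectorSpan ℝ (Set.range z))
          omega)
      obtain ⟨e⟩ : Nonempty (ι ↪ Fin d) := by
        rw [Function.Embedding.nonempty_iff_card_le]
        simpa using hcard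
      set W : Fin d → ℝ := Function.extend e w (fun _ => 0) with hW
      set Z : Fin d → E := Function.extend e z (fun _ => p₀) with hZ
      have hWe : ∀ i, W (e i) = w i := fun i => e.injective.extend_apply w _ i
      have hZe : ∀ i, Z (e i) = z i := fun i => e.injective.extend_apply z _ i
      have hW0 : ∀ j, (¬ ∃ i, e i = j) → W j = 0 := fun j hj => Function.extend_apply' w _ j hj
      refine ⟨⟨W, Z⟩, ⟨⟨fun j => ?_, ?_⟩, fun j _ => ?_⟩, ?_⟩
      · show 0 ≤ W j
        rcases em (∃ i, e i = j) with ⟨i, rfl⟩ | hj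
        · rw [hWe]; exact (hwpos i).le
        · rw [hW0 j hj]
      · show ∑ j, W j = 1
        rw [my_sum_extend e W hW0]
        simp only [hWe]
        exact hwsum
      · show Z j ∈ s
        rcases em (∃ i, e i = j) with ⟨i, rfl⟩ | hj
        · rw [hZe]; exact hzs (Set.mem_range_self i)
        · rw [hZ, Function.extend_apply' z _ j hj]; exact hp₀
      · show ∑ j, W j • Z j = x
        rw [my_sum_extend e (fun j => W j • Z j) (fun j hj => by simp only [hW0 j hj, zero_smul])]
        simp only [hWe, hZe]
        exact hwz
    · rintro _ ⟨⟨w, z⟩, ⟨hw, hz⟩, rfl⟩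
      exact (convex_convexHull ℝ s).sum_mem (fun i _ => hw.1 i) hw.2
        (fun i _ => subset_convexHull ℝ s (hz i (mem_univ i)))
  rw [himage]
  exact hK.image hfc

section BJ

variable {𝕜 X Y : Type*} [RCLike 𝕜] [NormedAddCommGroup X] [NormedSpace 𝕜 X]
    [NormedAddCommGroup Y] [NormedSpace 𝕜 Y]

def myOmega (T A : X →L[𝕜] Y) : Set 𝕜 :=
  {lam : 𝕜 | ∃ (x : ℕ → X) (y : ℕ → (Y →L[𝕜] 𝕜)),
    (∀ n, ‖x n‖ = 1) ∧ (∀ n, ‖y n‖ = 1) ∧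
    Tendsto (fun n => y n (T (x n))) atTop (𝓝 (‖T‖ : 𝕜)) ∧
    Tendsto (fun n => y n (A (x n))) atTop (𝓝 lam)}

lemma myOmega_le (T A : X →L[𝕜] Y) {lam : 𝕜} (h : lam ∈ myOmega T A) (μ : 𝕜) :
    ‖T‖ + RCLike.re (μ * lam) ≤ ‖T + μ • A‖ := by
  obtain ⟨x, y, hx, hy, h1, h2⟩ := h
  have hb : ∀ n, ‖y n (T (x n)) + μ * y n (A (x n))‖ ≤ ‖T + μ • A‖ := by
    intro n
    have he : y n (T (x n)) + μ * y n (A (x n)) = y n ((T + μ • A) (x n)) := by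
      simp [ContinuousLinearMap.add_apply, ContinuousLinearMap.smul_apply, map_add, map_smul,
        smul_eq_mul]
    rw [he]
    calc ‖y n ((T + μ • A) (x n))‖ ≤ ‖y n‖ * ‖(T + μ • A) (x n)‖ := (y n).le_opNorm _
      _ = ‖(T + μ • A) (x n)‖ := by rw [hy n, one_mul]
      _ ≤ ‖T + μ • A‖ * ‖x n‖ := (T + μ • A).le_opNorm _
      _ = ‖T + μ • A‖ := by rw [hx n, mul_one]
  have hlim : Tendsto (fun n => ‖y n (T (x n)) + μ * y n (A (x n))‖) atTop
      (𝓝 ‖(‖T‖ : 𝕜) + μ * lam‖) := (h1.add (h2.const_mul μ)).norm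
  have hle : ‖(‖T‖ : 𝕜) + μ * lam‖ ≤ ‖T + μ • A‖ := le_of_tendsto hlim (Eventually.of_forall hb)
  calc ‖T‖ + RCLike.re (μ * lam) = RCLike.re ((‖T‖ : 𝕜) + μ * lam) := by simp
    _ ≤ ‖(‖T‖ : 𝕜) + μ * lam‖ := RCLike.re_le_norm _
    _ ≤ ‖T + μ • A‖ := hle

lemma myOmega_subset (T A : X →L[𝕜] Y) : myOmega T A ⊆ Metric.closedBall (0:𝕜) ‖A‖ := by
  rintro lam ⟨x, y, hx, hy, h1, h2⟩
  rw [Metric.mem_closedBall, dist_zero_right]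
  refine le_of_tendsto h2.norm (Eventually.of_forall fun n => ?_)
  calc ‖y n (A (x n))‖ ≤ ‖y n‖ * ‖A (x n)‖ := (y n).le_opNorm _
    _ = ‖A (x n)‖ := by rw [hy n, one_mul]
    _ ≤ ‖A‖ * ‖x n‖ := A.le_opNorm _
    _ = ‖A‖ := by rw [hx n, mul_one]

lemma myOmega_isClosed (T A : X →L[𝕜] Y) : IsClosed (myOmega T A) := by
  refine isClosed_of_closure_subset fun lam hl => ?_
  obtain ⟨w, hw, hwl⟩ := mem_closure_iff_seq_limit.mp hl
  have H : ∀ k : ℕ, ∃ (xx : X) (yy : Y →L[𝕜] 𝕜), ‖xx‖ = 1 ∧ ‖yy‖ = 1 ∧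
      ‖yy (T xx) - (‖T‖:𝕜)‖ ≤ 1/((k:ℝ)+1) ∧ ‖yy (A xx) - w k‖ ≤ 1/((k:ℝ)+1) := by
    intro k
    obtain ⟨x, y, hx, hy, h1, h2⟩ := hw k
    obtain ⟨N1, hN1⟩ := Metric.tendsto_atTop.mp h1 (1/((k:ℝ)+1)) (by positivity)
    obtain ⟨N2, hN2⟩ := Metric.tendsto_atTop.mp h2 (1/((k:ℝ)+1)) (by positivity)
    refine ⟨x (max N1 N2), y (max N1 N2), hx _, hy _, ?_, ?_⟩
    · have := hN1 _ (le_max_left N1 N2); rw [dist_eq_norm] at this; exact this.le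
    · have := hN2 _ (le_max_right N1 N2); rw [dist_eq_norm] at this; exact this.le
  choose xx yy hxx hyy h1 h2 using H
  have hone : Tendsto (fun k : ℕ => 1/((k:ℝ)+1)) atTop (𝓝 0) :=
    tendsto_one_div_add_atTop_nhds_zero_nat
  refine ⟨xx, yy, hxx, hyy, ?_, ?_⟩
  · rw [tendsto_iff_norm_sub_tendsto_zero]
    exact squeeze_zero (fun n => norm_nonneg _) h1 hone
  · rw [tendsto_iff_norm_sub_tendsto_zero]
    have hbound : ∀ k : ℕ, ‖yy k (A (xx k)) - lam‖ ≤ 1/((k:ℝ)+1) + ‖w k - lam‖ := by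
      intro k
      calc ‖yy k (A (xx k)) - lam‖ = ‖(yy k (A (xx k)) - w k) + (w k - lam)‖ := by
            rw [sub_add_sub_cancel]
        _ ≤ ‖yy k (A (xx k)) - w k‖ + ‖w k - lam‖ := norm_add_le _ _
        _ ≤ 1/((k:ℝ)+1) + ‖w k - lam‖ := add_le_add_left (h2 k) _
    refine squeeze_zero (fun n => norm_nonneg _) hbound ?_
    simpa using hone.add (tendsto_iff_norm_sub_tendsto_zero.mp hwl)

lemma myOmega_key (T A : X →L[𝕜] Y) (hT : T ≠ 0)
    (h : ∀ lam : 𝕜, ‖T‖ ≤ ‖T + lam • A‖) (μ₀ : 𝕜) :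
    ∃ lam ∈ myOmega T A, 0 ≤ RCLike.re (μ₀ * lam) := by
  have hTpos : (0:ℝ) < ‖T‖ := norm_pos_iff.mpr hT
  set δ : ℝ := min 1 ‖T‖ with hδdef
  have hδpos : 0 < δ := lt_min one_pos hTpos
  have hδ1 : δ ≤ 1 := min_le_left _ _
  have hδT : δ ≤ ‖T‖ := min_le_right _ _
  set t : ℕ → ℝ := fun n => δ / ((n:ℝ) + 2) with htdef
  have htpos : ∀ n, 0 < t n := fun n => div_pos hδpos (by positivity)
  have hcast2 : ∀ n : ℕ, (2:ℝ) ≤ (n:ℝ) + 2 := fun n => by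
    have := Nat.cast_nonneg (α := ℝ) n; linarith
  have hthalf : ∀ n, t n ≤ 1/2 := by
    intro n
    show δ / ((n:ℝ) + 2) ≤ 1/2
    gcongr <;> first | exact hδ1 | exact hcast2 n
  have htT : ∀ n, t n ≤ ‖T‖ := by
    intro n
    refine (div_le_self hδpos.le ?_).trans hδT
    have := Nat.cast_nonneg (α := ℝ) n; linarith
  have ht0 : Tendsto t atTop (𝓝 0) := by
    apply Tendsto.div_atTop (tendsto_const_nhds (x := δ))
    exact tendsto_atTop_add_const_right atTop 2 tendsto_natCast_atTop_atTop
  -- pointwise construction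
  have H : ∀ n : ℕ, ∃ (u : X) (g : Y →L[𝕜] 𝕜), ‖u‖ = 1 ∧ ‖g‖ = 1 ∧
      ‖T‖ - t n ^ 2 ≤ RCLike.re (g (T u) + ((t n : ℝ) : 𝕜) * (μ₀ * g (A u))) := by
    intro n
    set μ : 𝕜 := ((t n : ℝ) : 𝕜) * μ₀ with hμ
    set B := T + μ • A with hB
    have hb : ‖T‖ ≤ ‖B‖ := h μ
    have hcpos : 0 < ‖T‖ - t n ^ 2 := by nlinarith [htpos n, hthalf n, htT n]
    have hc : ‖T‖ - t n ^ 2 < ‖B‖ := by nlinarith [htpos n]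
    obtain ⟨x', hx1, hx2⟩ := B.exists_lt_apply_of_lt_opNorm hc
    have hx'ne : x' ≠ 0 := by
      rintro rfl
      rw [map_zero, norm_zero] at hx2
      linarith
    have hx'pos : 0 < ‖x'‖ := norm_pos_iff.mpr hx'ne
    set u : X := ((‖x'‖⁻¹ : ℝ) : 𝕜) • x' with hu
    have hunorm : ‖u‖ = 1 := by
      rw [hu, norm_smul, RCLike.norm_ofReal, abs_of_pos (inv_pos.mpr hx'pos),
        inv_mul_cancel₀ hx'pos.ne']
    have hBu : ‖T‖ - t n ^ 2 < ‖B u‖ := by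
      have he : B u = ((‖x'‖⁻¹ : ℝ) : 𝕜) • B x' := by rw [hu, map_smul]
      have hinv1 : (1:ℝ) ≤ ‖x'‖⁻¹ := (one_le_inv₀ hx'pos).mpr hx1.le
      calc ‖T‖ - t n ^ 2 < ‖B x'‖ := hx2
        _ = 1 * ‖B x'‖ := (one_mul _).symm
        _ ≤ ‖x'‖⁻¹ * ‖B x'‖ := by gcongr
        _ = ‖B u‖ := by
            rw [he, norm_smul, RCLike.norm_ofReal, abs_of_pos (inv_pos.mpr hx'pos)]
    have hBune : B u ≠ 0 := by
      intro h0
      rw [h0, norm_zero] at hBu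
      linarith
    obtain ⟨g, hg1, hg2⟩ := exists_dual_vector 𝕜 (B u) (norm_ne_zero_iff.mpr hBune)
    refine ⟨u, g, hunorm, hg1, ?_⟩
    have he : g (B u) = g (T u) + ((t n : ℝ) : 𝕜) * (μ₀ * g (A u)) := by
      rw [hB, hμ]
      simp [ContinuousLinearMap.add_apply, ContinuousLinearMap.smul_apply, map_add, map_smul,
        smul_eq_mul, mul_assoc]
    rw [← he, hg2, RCLike.ofReal_re]
    exact hBu.le
  choose u g hu hg hre using H
  -- basic bounds
  have hbT : ∀ n, ‖g n (T (u n))‖ ≤ ‖T‖ := by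
    intro n
    calc ‖g n (T (u n))‖ ≤ ‖g n‖ * ‖T (u n)‖ := (g n).le_opNorm _
      _ = ‖T (u n)‖ := by rw [hg n, one_mul]
      _ ≤ ‖T‖ * ‖u n‖ := T.le_opNorm _
      _ = ‖T‖ := by rw [hu n, mul_one]
  have haA : ∀ n, ‖g n (A (u n))‖ ≤ ‖A‖ := by
    intro n
    calc ‖g n (A (u n))‖ ≤ ‖g n‖ * ‖A (u n)‖ := (g n).le_opNorm _
      _ = ‖A (u n)‖ := by rw [hg n, one_mul]
      _ ≤ ‖A‖ * ‖u n‖ := A.le_opNorm _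
      _ = ‖A‖ := by rw [hu n, mul_one]
  have hresplit : ∀ n, ‖T‖ - t n ^ 2 ≤
      RCLike.re (g n (T (u n))) + t n * RCLike.re (μ₀ * g n (A (u n))) := by
    intro n
    have := hre n
    rwa [map_add, ← RCLike.real_smul_eq_coe_mul, RCLike.smul_re] at this
  have hge : ∀ n, -(t n) ≤ RCLike.re (μ₀ * g n (A (u n))) := by
    intro n
    have h1 := hresplit n
    have h2 : RCLike.re (g n (T (u n))) ≤ ‖T‖ :=
      (RCLike.re_le_norm _).trans (hbT n)
    nlinarith [htpos n]
  have hreb : ∀ n, ‖T‖ - (t n ^ 2 + t n * (‖μ₀‖ * ‖A‖)) ≤ RCLike.re (g n (T (u n))) := by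
    intro n
    have h1 := hresplit n
    have h2 : RCLike.re (μ₀ * g n (A (u n))) ≤ ‖μ₀‖ * ‖A‖ := by
      calc RCLike.re (μ₀ * g n (A (u n))) ≤ ‖μ₀ * g n (A (u n))‖ := RCLike.re_le_norm _
        _ = ‖μ₀‖ * ‖g n (A (u n))‖ := norm_mul _ _
        _ ≤ ‖μ₀‖ * ‖A‖ := by
            have := haA n
            have := norm_nonneg μ₀
            nlinarith
    nlinarith [htpos n]
  -- convergence of T-part
  have hbtend : Tendsto (fun n => g n (T (u n))) atTop (𝓝 ((‖T‖:ℝ) : 𝕜)) := by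
    rw [tendsto_iff_norm_sub_tendsto_zero]
    have hterm : ∀ n, ‖g n (T (u n)) - ((‖T‖:ℝ) : 𝕜)‖ ≤
        Real.sqrt (2 * ‖T‖ * (t n ^ 2 + t n * (‖μ₀‖ * ‖A‖))) := by
      intro n
      rw [Real.le_sqrt (norm_nonneg _) (by positivity)]
      have e1 : ‖g n (T (u n)) - ((‖T‖:ℝ) : 𝕜)‖ ^ 2 =
          ‖g n (T (u n))‖ ^ 2 - 2 * ‖T‖ * RCLike.re (g n (T (u n))) + ‖T‖ ^ 2 := by
        rw [RCLike.norm_sq_eq_def, RCLike.norm_sq_eq_def (z := g n (T (u n)))]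
        simp only [map_sub, RCLike.ofReal_re, RCLike.ofReal_im, sub_zero]
        ring
      have e2 : ‖g n (T (u n))‖ ^ 2 ≤ ‖T‖ ^ 2 := by
        have := hbT n
        have := norm_nonneg (g n (T (u n)))
        nlinarith
      have e3 := hreb n
      nlinarith [hTpos]
    refine squeeze_zero (fun n => norm_nonneg _) hterm ?_
    have h0 : Tendsto (fun n => 2 * ‖T‖ * (t n ^ 2 + t n * (‖μ₀‖ * ‖A‖))) atTop (𝓝 0) := by
      have h1 : Tendsto (fun n => t n ^ 2 + t n * (‖μ₀‖ * ‖A‖)) atTop (𝓝 0) := by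
        have hsq : Tendsto (fun n => t n ^ 2) atTop (𝓝 0) := by
          have := ht0.mul ht0
          simpa [sq] using this
        have hl : Tendsto (fun n => t n * (‖μ₀‖ * ‖A‖)) atTop (𝓝 0) := by
          simpa using ht0.mul_const (‖μ₀‖ * ‖A‖)
        simpa using hsq.add hl
      simpa using h1.const_mul (2 * ‖T‖)
    have := h0.sqrt
    simpa using this
  -- subsequence of A-part
  have hmem : ∀ n, g n (A (u n)) ∈ Metric.closedBall (0:𝕜) ‖A‖ := by
    intro n
    rw [Metric.mem_closedBall, dist_zero_right]
    exact haA n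
  obtain ⟨lam, _, φ, hφ, hlam⟩ :=
    tendsto_subseq_of_bounded Metric.isBounded_closedBall hmem
  refine ⟨lam, ⟨fun n => u (φ n), fun n => g (φ n), fun n => hu _, fun n => hg _, ?_, ?_⟩, ?_⟩
  · exact hbtend.comp hφ.tendsto_atTop
  · exact hlam
  · have h1 : Tendsto (fun n => RCLike.re (μ₀ * g (φ n) (A (u (φ n))))) atTop
        (𝓝 (RCLike.re (μ₀ * lam))) := by
      have := hlam.const_mul μ₀
      exact (RCLike.continuous_re.tendsto _).comp this
    have h2 : Tendsto (fun n => -(t (φ n))) atTop (𝓝 0) := by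
      simpa using (ht0.comp hφ.tendsto_atTop).neg
    exact le_of_tendsto_of_tendsto' h2 h1 (fun n => hge (φ n))

end BJ

theorem stmt1 {𝕜 X Y : Type*} [RCLike 𝕜] [NormedAddCommGroup X] [NormedSpace 𝕜 X]
    [NormedAddCommGroup Y] [NormedSpace 𝕜 Y] (T A : X →L[𝕜] Y)
    (hT : T ≠ 0) (hA : A ≠ 0) :
    (∀ lam : 𝕜, ‖T‖ ≤ ‖T + lam • A‖) ↔
      (0 : 𝕜) ∈ convexHull ℝ {lam : 𝕜 | ∃ (x : ℕ → X) (y : ℕ → (Y →L[𝕜] 𝕜)),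
        (∀ n, ‖x n‖ = 1) ∧ (∀ n, ‖y n‖ = 1) ∧
        Tendsto (fun n => y n (T (x n))) atTop (𝓝 (‖T‖ : 𝕜)) ∧
        Tendsto (fun n => y n (A (x n))) atTop (𝓝 lam)} := by
  have hset : {lam : 𝕜 | ∃ (x : ℕ → X) (y : ℕ → (Y →L[𝕜] 𝕜)),
        (∀ n, ‖x n‖ = 1) ∧ (∀ n, ‖y n‖ = 1) ∧
        Tendsto (fun n => y n (T (x n))) atTop (𝓝 (‖T‖ : 𝕜)) ∧
        Tendsto (fun n => y n (A (x n))) atTop (𝓝 lam)} = myOmega T A := rfl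
  rw [hset]
  constructor
  · intro h
    by_contra h0
    have hcomp : IsCompact (myOmega T A) :=
      Metric.isCompact_of_isClosed_isBounded (myOmega_isClosed T A)
        (Metric.isBounded_closedBall.subset (myOmega_subset T A))
    have hcc : IsCompact (convexHull ℝ (myOmega T A)) := my_isCompact_convexHull hcomp
    obtain ⟨f, v, hfv, hv0⟩ :=
      geometric_hahn_banach_closed_point (convex_convexHull ℝ _) hcc.isClosed h0
    have hv : v < 0 := by simpa using hv0
    set μ₀ : 𝕜 := (f 1 : ℝ) • (1:𝕜) - (f (RCLike.I : 𝕜) : ℝ) • (RCLike.I : 𝕜) with hμ₀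
    have hrep : ∀ lam : 𝕜, RCLike.re (μ₀ * lam) = f lam := by
      intro lam
      have hl : lam = (RCLike.re lam : ℝ) • (1:𝕜) + (RCLike.im lam : ℝ) • (RCLike.I : 𝕜) := by
        rw [RCLike.real_smul_eq_coe_mul, RCLike.real_smul_eq_coe_mul, mul_one]
        exact (RCLike.re_add_im lam).symm
      have lhs : RCLike.re (μ₀ * lam) =
          f 1 * RCLike.re lam + f (RCLike.I : 𝕜) * RCLike.im lam := by
        rw [hμ₀, sub_mul, smul_mul_assoc, smul_mul_assoc, one_mul, map_sub,
          RCLike.smul_re, RCLike.smul_re, RCLike.I_mul_re]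
        ring
      rw [lhs]
      conv_rhs => rw [hl]
      rw [map_add, map_smul, map_smul, smul_eq_mul, smul_eq_mul]
      ring
    obtain ⟨lam, hlamΩ, hlam⟩ := myOmega_key T A hT h μ₀
    have hflt := hfv lam (subset_convexHull ℝ _ hlamΩ)
    rw [hrep lam] at hlam
    linarith
  · intro h0 μ
    have hlin : IsLinearMap ℝ (fun lam : 𝕜 => RCLike.re (μ * lam)) := by
      constructor
      · intro a b; rw [mul_add, map_add]
      · intro r a; rw [mul_smul_comm, RCLike.smul_re]; rfl
    have hconv : Convex ℝ {lam : 𝕜 | RCLike.re (μ * lam) ≤ ‖T + μ • A‖ - ‖T‖} :=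
      convex_halfSpace_le hlin _
    have hsub : myOmega T A ⊆ {lam : 𝕜 | RCLike.re (μ * lam) ≤ ‖T + μ • A‖ - ‖T‖} := by
      intro lam hl
      have := myOmega_le T A hl μ
      simp only [Set.mem_setOf_eq]
      linarith
    have h00 := convexHull_min hsub hconv h0
    simp only [Set.mem_setOf_eq, mul_zero, map_zero] at h00
    linarith
end

section
/- Let X_1, …, X_k and Y be finite-dimensional Banach spaces, and let T, A be nonzero bounded k-linear maps from X_1 × ⋯ × X_k to Y. Then the sequential set Ω(T,A) := { λ : ∃ sequences ((x⃗ₙ, yₙ*)) with yₙ*(T x⃗ₙ) → ‖T‖ and yₙ*(A x⃗ₙ) → λ } equals the set Ω'(T,A) := { y*(A x⃗) : x⃗ ∈ M_T, y* ∈ J(T x⃗) }, where M_T is the norm attainment set of T and J(z) is the set of norm-one support functionals at z. -/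
open Filter Topology

theorem stmt3 {𝕜 : Type*} [RCLike 𝕜] {k : ℕ} {X : Fin k → Type*}
    [∀ i, NormedAddCommGroup (X i)] [∀ i, NormedSpace 𝕜 (X i)]
    [∀ i, FiniteDimensional 𝕜 (X i)]
    {Y : Type*} [NormedAddCommGroup Y] [NormedSpace 𝕜 Y] [FiniteDimensional 𝕜 Y]
    (T A : ContinuousMultilinearMap 𝕜 X Y) (hT : T ≠ 0) (hA : A ≠ 0) :
    {lam : 𝕜 | ∃ (x : ℕ → ∀ i, X i) (y : ℕ → (Y →L[𝕜] 𝕜)),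
        (∀ n i, ‖x n i‖ = 1) ∧ (∀ n, ‖y n‖ = 1) ∧
        Tendsto (fun n => y n (T (x n))) atTop (𝓝 (‖T‖ : 𝕜)) ∧
        Tendsto (fun n => y n (A (x n))) atTop (𝓝 lam)}
      = {lam : 𝕜 | ∃ (x : ∀ i, X i) (y : Y →L[𝕜] 𝕜),
        (∀ i, ‖x i‖ = 1) ∧ ‖T x‖ = ‖T‖ ∧ ‖y‖ = 1 ∧
        y (T x) = (‖T x‖ : 𝕜) ∧ lam = y (A x)} := by
  ext lam
  simp only [Set.mem_setOf_eq]
  constructor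
  · rintro ⟨x, y, hx, hy, hTlim, hAlim⟩
    -- compactness argument
    set K : Set ((∀ i, X i) × (Y →L[𝕜] 𝕜)) :=
      (Set.univ.pi fun i => Metric.sphere (0 : X i) 1) ×ˢ Metric.sphere (0 : Y →L[𝕜] 𝕜) 1 with hK
    haveI : ∀ i, ProperSpace (X i) := fun i => FiniteDimensional.proper 𝕜 (X i)
    haveI : ProperSpace (Y →L[𝕜] 𝕜) := FiniteDimensional.proper 𝕜 _
    have hKc : IsCompact K := by
      apply IsCompact.prod
      · exact isCompact_univ_pi fun i => isCompact_sphere 0 1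
      · exact isCompact_sphere 0 1
    have hzK : ∀ n, (x n, y n) ∈ K := by
      intro n
      refine ⟨fun i _ => ?_, ?_⟩
      · simpa [mem_sphere_zero_iff_norm] using hx n i
      · simpa [mem_sphere_zero_iff_norm] using hy n
    obtain ⟨⟨x₀, y₀⟩, hmem, φ, hφ, hlim⟩ := hKc.tendsto_subseq hzK
    have hx₀ : ∀ i, ‖x₀ i‖ = 1 := fun i => by
      simpa [mem_sphere_zero_iff_norm] using hmem.1 i (Set.mem_univ i)
    have hy₀ : ‖y₀‖ = 1 := by
      simpa [mem_sphere_zero_iff_norm] using hmem.2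
    have hcx : Tendsto (fun n => x (φ n)) atTop (𝓝 x₀) :=
      (continuous_fst.tendsto _).comp hlim
    have hcy : Tendsto (fun n => y (φ n)) atTop (𝓝 y₀) :=
      (continuous_snd.tendsto _).comp hlim
    have hcontT : Tendsto (fun n => (y (φ n)) (T (x (φ n)))) atTop (𝓝 (y₀ (T x₀))) := by
      have : Continuous fun p : ((∀ i, X i) × (Y →L[𝕜] 𝕜)) => p.2 (T p.1) :=
        continuous_snd.clm_apply (T.cont.comp continuous_fst)
      exact (this.tendsto _).comp hlim
    have hcontA : Tendsto (fun n => (y (φ n)) (A (x (φ n)))) atTop (𝓝 (y₀ (A x₀))) := by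
      have : Continuous fun p : ((∀ i, X i) × (Y →L[𝕜] 𝕜)) => p.2 (A p.1) :=
        continuous_snd.clm_apply (A.cont.comp continuous_fst)
      exact (this.tendsto _).comp hlim
    have hTeq : y₀ (T x₀) = (‖T‖ : 𝕜) :=
      tendsto_nhds_unique hcontT (hTlim.comp hφ.tendsto_atTop)
    have hAeq : y₀ (A x₀) = lam :=
      tendsto_nhds_unique hcontA (hAlim.comp hφ.tendsto_atTop)
    have hle : ‖T x₀‖ ≤ ‖T‖ := by
      calc ‖T x₀‖ ≤ ‖T‖ * ∏ i, ‖x₀ i‖ := T.le_opNorm x₀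
        _ = ‖T‖ := by simp [hx₀]
    have hge : ‖T‖ ≤ ‖T x₀‖ := by
      have h1 : ‖y₀ (T x₀)‖ = ‖T‖ := by
        rw [hTeq]; simp
      calc ‖T‖ = ‖y₀ (T x₀)‖ := h1.symm
        _ ≤ ‖y₀‖ * ‖T x₀‖ := y₀.le_opNorm _
        _ = ‖T x₀‖ := by rw [hy₀, one_mul]
    have hnorm : ‖T x₀‖ = ‖T‖ := le_antisymm hle hge
    exact ⟨x₀, y₀, hx₀, hnorm, hy₀, by rw [hTeq, hnorm], hAeq.symm⟩
  · rintro ⟨x, y, hx, hTx, hy, hyTx, hlam⟩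
    refine ⟨fun _ => x, fun _ => y, fun _ => hx, fun _ => hy, ?_, ?_⟩
    · simp only [hyTx, hTx]; exact tendsto_const_nhds
    · simp only [hlam]; exact tendsto_const_nhds
end

section
/- Let X and Y be finite-dimensional Banach spaces over F, and let T, A be nonzero linear operators from X to Y. Then T ⊥_B A if and only if 0 lies in the convex hull of the set { y*(A x) : x ∈ S_X, ‖T x‖ = ‖T‖, y* ∈ S_{Y*}, y*(T x) = ‖T‖ }. -/
open RCLike Set Filter Topology Metric

section Aux

variable {𝕜 : Type*} [RCLike 𝕜]

/-- Every real-linear functional on an `RCLike` field is `z ↦ re (b * z)` for some `b`. -/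
lemma rep_exists (f : 𝕜 →L[ℝ] ℝ) : ∃ b : 𝕜, ∀ z : 𝕜, re (b * z) = f z := by
  refine ⟨((f 1 : ℝ) : 𝕜) - ((f (I : 𝕜) : ℝ) : 𝕜) * I, fun z => ?_⟩
  have hz : f z = re z * f 1 + im z * f (I : 𝕜) := by
    conv_lhs => rw [← re_add_im z]
    rw [map_add, ofReal_alg (re z), ← real_smul_eq_coe_mul, map_smul, map_smul,
      smul_eq_mul, smul_eq_mul]
  rw [hz, sub_mul, map_sub, re_ofReal_mul, mul_assoc, re_ofReal_mul, mul_re, I_re, I_im']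
  ring

/-- The convex hull of a nonempty compact set in a finite-dimensional real normed space is
compact. -/
lemma isCompact_convexHull_of_isCompact {E : Type*} [NormedAddCommGroup E] [NormedSpace ℝ E]
    [FiniteDimensional ℝ E] {s : Set E} (hs : IsCompact s) (hne : s.Nonempty) :
    IsCompact (convexHull ℝ s) := by
  classical
  obtain ⟨s₀, hs₀⟩ := hne
  set n := Module.finrank ℝ E + 1 with hn
  have hcont : Continuous (fun p : (Fin n → ℝ) × (Fin n → E) => ∑ i, p.1 i • p.2 i) :=
    continuous_finset_sum _ fun i _ =>
      ((continuous_apply i).comp continuous_fst).smul ((continuous_apply i).comp continuous_snd)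
  have hK : IsCompact ((stdSimplex ℝ (Fin n)) ×ˢ (Set.univ.pi fun _ : Fin n => s)) :=
    (isCompact_stdSimplex _ _).prod (isCompact_univ_pi fun _ => hs)
  have himg : (fun p : (Fin n → ℝ) × (Fin n → E) => ∑ i, p.1 i • p.2 i) ''
      ((stdSimplex ℝ (Fin n)) ×ˢ (Set.univ.pi fun _ : Fin n => s)) = convexHull ℝ s := by
    apply Subset.antisymm
    · rintro x ⟨⟨w, z⟩, ⟨hw, hz⟩, rfl⟩
      exact (convex_convexHull ℝ s).sum_mem (fun i _ => hw.1 i) hw.2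
        (fun i _ => subset_convexHull ℝ s (hz i (mem_univ i)))
    · intro x hx
      obtain ⟨ι, hι, z, w, hzs, hAI, hwpos, hwsum, hxeq⟩ :=
        eq_pos_convex_span_of_mem_convexHull hx
      have hcard : Fintype.card ι ≤ n := by
        rcases isEmpty_or_nonempty ι with hemp | hne
        · simp [Fintype.card_eq_zero]
        · have h1 := hAI.finrank_vectorSpan_add_one
          have h2 : Module.finrank ℝ (vectorSpan ℝ (Set.range z)) ≤ Module.finrank ℝ E :=
            Submodule.finrank_le _
          omega
      obtain ⟨e⟩ := Function.Embedding.nonempty_of_card_le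
        (β := Fin n) (by simpa using hcard)
      set w' : Fin n → ℝ := Function.extend e w 0 with hw'
      set z' : Fin n → E := Function.extend e z (fun _ => s₀) with hz'
      have hw'app : ∀ i, w' (e i) = w i := fun i => e.injective.extend_apply _ _ _
      have hz'app : ∀ i, z' (e i) = z i := fun i => e.injective.extend_apply _ _ _
      have hw'zero : ∀ j, (¬ ∃ i, e i = j) → w' j = 0 := fun j hj =>
        Function.extend_apply' _ _ _ hj
      have hsum_eq : ∀ (g : Fin n → ℝ → E → E) (F : Fin n → E),
          True := fun _ _ => trivial
      refine ⟨(w', z'), ⟨⟨fun j => ?_, ?_⟩, fun j _ => ?_⟩, ?_⟩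
      · show 0 ≤ w' j
        by_cases hj : ∃ i, e i = j
        · obtain ⟨i, rfl⟩ := hj
          rw [hw'app]; exact (hwpos i).le
        · rw [hw'zero j hj]
      · -- sum of weights is 1
        show ∑ j, w' j = 1
        have h1 : ∑ j, w' j = ∑ j ∈ Finset.univ.image e, w' j := by
          refine (Finset.sum_subset (Finset.subset_univ _) ?_).symm
          intro j _ hj
          refine hw'zero j ?_
          intro ⟨i, hi⟩
          exact hj (Finset.mem_image.2 ⟨i, Finset.mem_univ i, hi⟩)
        rw [h1, Finset.sum_image (fun a _ b _ hab => e.injective hab)]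
        simpa [hw'app] using hwsum
      · show z' j ∈ s
        by_cases hj : ∃ i, e i = j
        · obtain ⟨i, rfl⟩ := hj
          rw [hz'app]; exact hzs ⟨i, rfl⟩
        · rw [hz', Function.extend_apply' _ _ _ hj]; exact hs₀
      · -- the combination equals x
        show ∑ j, w' j • z' j = x
        have h1 : ∑ j, w' j • z' j = ∑ j ∈ Finset.univ.image e, w' j • z' j := by
          refine (Finset.sum_subset (Finset.subset_univ _) ?_).symm
          intro j _ hj
          have : w' j = 0 := by
            refine hw'zero j ?_
            intro ⟨i, hi⟩
            exact hj (Finset.mem_image.2 ⟨i, Finset.mem_univ i, hi⟩)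
          rw [this, zero_smul]
        rw [h1, Finset.sum_image (fun a _ b _ hab => e.injective hab)]
        simpa [hw'app, hz'app] using hxeq
  rw [← himg]
  exact hK.image hcont

variable {X Y : Type*} [NormedAddCommGroup X] [NormedSpace 𝕜 X]
  [NormedAddCommGroup Y] [NormedSpace 𝕜 Y]

/-- A nonzero continuous linear map from a finite-dimensional space attains its norm on the
unit sphere. -/
lemma exists_attains [FiniteDimensional 𝕜 X] (T : X →L[𝕜] Y) (hT : T ≠ 0) :
    ∃ x : X, ‖x‖ = 1 ∧ ‖T x‖ = ‖T‖ := by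
  haveI : ProperSpace X := FiniteDimensional.proper 𝕜 X
  obtain ⟨x₀, hx₀⟩ : ∃ x₀, T x₀ ≠ 0 := by
    by_contra hcon
    push_neg at hcon
    exact hT (ContinuousLinearMap.ext fun x => by simp [hcon x])
  have hx₀' : x₀ ≠ 0 := fun h => hx₀ (by simp [h])
  have hn : ‖x₀‖ ≠ 0 := norm_ne_zero_iff.mpr hx₀'
  have hx₁ : ((‖x₀‖⁻¹ : ℝ) : 𝕜) • x₀ ∈ sphere (0 : X) 1 := by
    rw [mem_sphere_zero_iff_norm, norm_smul, RCLike.norm_ofReal, abs_of_nonneg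
      (inv_nonneg.2 (norm_nonneg _))]
    field_simp
  obtain ⟨x, hx, hmax⟩ := (isCompact_sphere (0 : X) 1).exists_isMaxOn ⟨_, hx₁⟩
    ((T.continuous.norm).continuousOn)
  have hx1 : ‖x‖ = 1 := mem_sphere_zero_iff_norm.mp hx
  refine ⟨x, hx1, le_antisymm (T.unit_le_opNorm x hx1.le) ?_⟩
  refine ContinuousLinearMap.opNorm_le_bound T (norm_nonneg _) fun z => ?_
  rcases eq_or_ne z 0 with rfl | hz
  · simp
  · have hnz : ‖z‖ ≠ 0 := norm_ne_zero_iff.mpr hz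
    have hu : ((‖z‖⁻¹ : ℝ) : 𝕜) • z ∈ sphere (0 : X) 1 := by
      rw [mem_sphere_zero_iff_norm, norm_smul, RCLike.norm_ofReal, abs_of_nonneg
        (inv_nonneg.2 (norm_nonneg _))]
      field_simp
    have h2 := hmax hu
    simp only [Function.comp] at h2
    have h3 : ‖T (((‖z‖⁻¹ : ℝ) : 𝕜) • z)‖ = ‖z‖⁻¹ * ‖T z‖ := by
      rw [map_smul, norm_smul, RCLike.norm_ofReal, abs_of_nonneg (inv_nonneg.2 (norm_nonneg _))]
    have h4 : ‖z‖⁻¹ * ‖T z‖ ≤ ‖T x‖ := by rw [← h3]; exact h2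
    calc ‖T z‖ = ‖z‖ * (‖z‖⁻¹ * ‖T z‖) := by field_simp
    _ ≤ ‖z‖ * ‖T x‖ := by
        exact mul_le_mul_of_nonneg_left h4 (norm_nonneg _)
    _ = ‖T x‖ * ‖z‖ := mul_comm _ _

end Aux

theorem stmt4 {𝕜 X Y : Type*} [RCLike 𝕜] [NormedAddCommGroup X] [NormedSpace 𝕜 X]
    [FiniteDimensional 𝕜 X] [NormedAddCommGroup Y] [NormedSpace 𝕜 Y]
    [FiniteDimensional 𝕜 Y] (T A : X →L[𝕜] Y) (hT : T ≠ 0) (hA : A ≠ 0) :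
    (∀ lam : 𝕜, ‖T‖ ≤ ‖T + lam • A‖) ↔
      (0 : 𝕜) ∈ convexHull ℝ {lam : 𝕜 | ∃ (x : X) (y : Y →L[𝕜] 𝕜),
        ‖x‖ = 1 ∧ ‖T x‖ = ‖T‖ ∧ ‖y‖ = 1 ∧ y (T x) = (‖T‖ : 𝕜) ∧ lam = y (A x)} := by
  set S : Set 𝕜 := {lam : 𝕜 | ∃ (x : X) (y : Y →L[𝕜] 𝕜),
      ‖x‖ = 1 ∧ ‖T x‖ = ‖T‖ ∧ ‖y‖ = 1 ∧ y (T x) = (‖T‖ : 𝕜) ∧ lam = y (A x)} with hSdef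
  have hTnorm : (0 : ℝ) < ‖T‖ := norm_pos_iff.mpr hT
  constructor
  · -- forward direction
    intro h
    by_contra h0
    haveI : ProperSpace X := FiniteDimensional.proper 𝕜 X
    haveI : ProperSpace (Y →L[𝕜] 𝕜) := FiniteDimensional.proper 𝕜 _
    -- continuity of evaluation maps
    have hevT : Continuous fun p : X × (Y →L[𝕜] 𝕜) => p.2 (T p.1) :=
      isBoundedBilinearMap_apply.continuous.comp
        (continuous_snd.prodMk (T.continuous.comp continuous_fst))
    have hevA : Continuous fun p : X × (Y →L[𝕜] 𝕜) => p.2 (A p.1) :=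
      isBoundedBilinearMap_apply.continuous.comp
        (continuous_snd.prodMk (A.continuous.comp continuous_fst))
    set M : Set (X × (Y →L[𝕜] 𝕜)) := {p | ‖p.1‖ = 1 ∧ ‖T p.1‖ = ‖T‖ ∧ ‖p.2‖ = 1 ∧
      p.2 (T p.1) = (‖T‖ : 𝕜)} with hMdef
    have hMcompact : IsCompact M := by
      have h1 : M = (sphere (0 : X) 1 ×ˢ sphere (0 : Y →L[𝕜] 𝕜) 1) ∩
          ({p : X × (Y →L[𝕜] 𝕜) | ‖T p.1‖ = ‖T‖} ∩
           {p : X × (Y →L[𝕜] 𝕜) | p.2 (T p.1) = (‖T‖ : 𝕜)}) := by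
        ext p
        simp only [hMdef, Set.mem_setOf_eq, Set.mem_inter_iff, Set.mem_prod,
          mem_sphere_zero_iff_norm]
        tauto
      rw [h1]
      exact ((isCompact_sphere _ _).prod (isCompact_sphere _ _)).inter_right
        ((isClosed_eq (continuous_norm.comp (T.continuous.comp continuous_fst))
          continuous_const).inter (isClosed_eq hevT continuous_const))
    have hSeq : S = (fun p : X × (Y →L[𝕜] 𝕜) => p.2 (A p.1)) '' M := by
      ext lam
      constructor
      · rintro ⟨x, y, h1, h2, h3, h4, rfl⟩
        exact ⟨(x, y), ⟨h1, h2, h3, h4⟩, rfl⟩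
      · rintro ⟨⟨x, y⟩, ⟨h1, h2, h3, h4⟩, rfl⟩
        exact ⟨x, y, h1, h2, h3, h4, rfl⟩
    have hSne : S.Nonempty := by
      obtain ⟨x, hx1, hx2⟩ := exists_attains T hT
      have hTx : T x ≠ 0 := by
        rw [← norm_ne_zero_iff, hx2]; exact hTnorm.ne'
      obtain ⟨y, hy1, hy2⟩ := exists_dual_vector 𝕜 (T x) (norm_ne_zero_iff.mpr hTx)
      exact ⟨y (A x), x, y, hx1, hx2, hy1, by rw [hy2, hx2], rfl⟩
    have hSc : IsCompact S := hSeq ▸ hMcompact.image hevA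
    have hconvc : IsCompact (convexHull ℝ S) := isCompact_convexHull_of_isCompact hSc hSne
    obtain ⟨f, u, hfu, hu0⟩ := _root_.geometric_hahn_banach_closed_point
      (convex_convexHull ℝ S) hconvc.isClosed h0
    have hu0' : u < 0 := by simpa using hu0
    obtain ⟨b, hb⟩ := rep_exists f
    have hM_neg : ∀ p ∈ M, re (b * p.2 (A p.1)) < u := by
      intro p hp
      rw [hb]
      exact hfu _ (subset_convexHull ℝ _ (hSeq ▸ ⟨p, hp, rfl⟩))
    -- construct the sequence of attaining pairs for perturbed operators
    have key : ∀ n : ℕ, ∃ p : X × (Y →L[𝕜] 𝕜), ‖p.1‖ = 1 ∧ ‖p.2‖ = 1 ∧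
        ‖T‖ ≤ re (p.2 (T p.1)) + (1 / (n + 1 : ℝ)) * re (b * p.2 (A p.1)) := by
      intro n
      set t : ℝ := 1 / (n + 1 : ℝ) with htdef
      set Tn : X →L[𝕜] Y := T + ((t : 𝕜) * b) • A with hTndef
      have hTn : ‖T‖ ≤ ‖Tn‖ := h _
      have hTn0 : Tn ≠ 0 := by
        intro hh
        rw [hh, norm_zero] at hTn
        exact absurd (lt_of_lt_of_le hTnorm hTn) (lt_irrefl 0)
      obtain ⟨x, hx1, hx2⟩ := exists_attains Tn hTn0
      have hTnx : Tn x ≠ 0 := by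
        rw [← norm_ne_zero_iff, hx2]
        exact (lt_of_lt_of_le hTnorm hTn).ne'
      obtain ⟨y, hy1, hy2⟩ := exists_dual_vector 𝕜 (Tn x) (norm_ne_zero_iff.mpr hTnx)
      refine ⟨(x, y), hx1, hy1, ?_⟩
      have hval : y (Tn x) = (‖Tn‖ : 𝕜) := by rw [hy2, hx2]
      have hexp : y (Tn x) = y (T x) + (t : 𝕜) * (b * y (A x)) := by
        simp only [hTndef, ContinuousLinearMap.add_apply, ContinuousLinearMap.smul_apply,
          map_add, map_smul, smul_eq_mul]
        ring
      calc ‖T‖ ≤ ‖Tn‖ := hTn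
        _ = re (y (Tn x)) := by rw [hval, ofReal_re]
        _ = re (y (T x)) + t * re (b * y (A x)) := by rw [hexp, map_add, re_ofReal_mul]
    choose p hp1 hp2 hp3 using key
    have hKcompact : IsCompact (sphere (0 : X) 1 ×ˢ sphere (0 : Y →L[𝕜] 𝕜) 1) :=
      (isCompact_sphere _ _).prod (isCompact_sphere _ _)
    have hpK : ∀ n, p n ∈ sphere (0 : X) 1 ×ˢ sphere (0 : Y →L[𝕜] 𝕜) 1 := fun n =>
      ⟨mem_sphere_zero_iff_norm.mpr (hp1 n), mem_sphere_zero_iff_norm.mpr (hp2 n)⟩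
    obtain ⟨q, hqK, φ, hφ, hconv⟩ := hKcompact.tendsto_subseq hpK
    have hq1 : ‖q.1‖ = 1 := mem_sphere_zero_iff_norm.mp hqK.1
    have hq2 : ‖q.2‖ = 1 := mem_sphere_zero_iff_norm.mp hqK.2
    -- the two continuous real functions
    have hG1 : Continuous fun p : X × (Y →L[𝕜] 𝕜) => re (p.2 (T p.1)) :=
      RCLike.continuous_re.comp hevT
    have hG2 : Continuous fun p : X × (Y →L[𝕜] 𝕜) => re (b * p.2 (A p.1)) :=
      RCLike.continuous_re.comp (continuous_const.mul hevA)
    have l1 : Tendsto (fun n => re ((p (φ n)).2 (T (p (φ n)).1))) atTop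
        (𝓝 (re (q.2 (T q.1)))) := (hG1.tendsto q).comp hconv
    have l2 : Tendsto (fun n => re (b * (p (φ n)).2 (A (p (φ n)).1))) atTop
        (𝓝 (re (b * q.2 (A q.1)))) := (hG2.tendsto q).comp hconv
    -- bound on G1
    have hG1le : ∀ n, re ((p n).2 (T (p n).1)) ≤ ‖T‖ := by
      intro n
      refine le_trans (re_le_norm _) ?_
      calc ‖(p n).2 (T (p n).1)‖ ≤ ‖(p n).2‖ * ‖T (p n).1‖ := (p n).2.le_opNorm _
        _ = ‖T (p n).1‖ := by rw [hp2 n, one_mul]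
        _ ≤ ‖T‖ := T.unit_le_opNorm _ (hp1 n).le
    -- the G2 values are nonnegative
    have htpos : ∀ n : ℕ, (0 : ℝ) < 1 / (n + 1 : ℝ) := fun n => by positivity
    have hG2nonneg : ∀ n, 0 ≤ re (b * (p n).2 (A (p n).1)) := by
      intro n
      have h1 := hp3 n
      have h2 := hG1le n
      have h3 : 0 ≤ (1 / (n + 1 : ℝ)) * re (b * (p n).2 (A (p n).1)) := by linarith
      exact (mul_nonneg_iff_of_pos_left (htpos n)).mp h3
    -- bound on G2
    have hG2le : ∀ n, re (b * (p n).2 (A (p n).1)) ≤ ‖b‖ * ‖A‖ := by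
      intro n
      refine le_trans (re_le_norm _) ?_
      calc ‖b * (p n).2 (A (p n).1)‖ = ‖b‖ * ‖(p n).2 (A (p n).1)‖ := norm_mul _ _
        _ ≤ ‖b‖ * ‖A‖ := by
            refine mul_le_mul_of_nonneg_left ?_ (norm_nonneg b)
            calc ‖(p n).2 (A (p n).1)‖ ≤ ‖(p n).2‖ * ‖A (p n).1‖ := (p n).2.le_opNorm _
              _ = ‖A (p n).1‖ := by rw [hp2 n, one_mul]
              _ ≤ ‖A‖ := A.unit_le_opNorm _ (hp1 n).le
    have hbA : 0 ≤ ‖b‖ * ‖A‖ := mul_nonneg (norm_nonneg _) (norm_nonneg _)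
    -- limit of G1 dominates ‖T‖
    have hTq : ‖T‖ ≤ re (q.2 (T q.1)) := by
      have hseq : Tendsto (fun n => re ((p (φ n)).2 (T (p (φ n)).1)) +
          (1 / (n + 1 : ℝ)) * (‖b‖ * ‖A‖)) atTop (𝓝 (re (q.2 (T q.1)) + 0 * (‖b‖ * ‖A‖))) :=
        l1.add (tendsto_one_div_add_atTop_nhds_zero_nat.mul_const _)
      rw [zero_mul, add_zero] at hseq
      have hbound : ∀ n, ‖T‖ ≤ re ((p (φ n)).2 (T (p (φ n)).1)) +
          (1 / (n + 1 : ℝ)) * (‖b‖ * ‖A‖) := by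
        intro n
        refine le_trans (hp3 (φ n)) ?_
        have h1 : (1 / (φ n + 1 : ℝ)) ≤ 1 / (n + 1 : ℝ) := by
          have hφn : (n : ℝ) ≤ (φ n : ℝ) := Nat.cast_le.mpr hφ.le_apply
          apply one_div_le_one_div_of_le (by positivity) (by linarith)
        have h2 : (1 / (φ n + 1 : ℝ)) * re (b * (p (φ n)).2 (A (p (φ n)).1)) ≤
            (1 / (n + 1 : ℝ)) * (‖b‖ * ‖A‖) := by
          apply mul_le_mul h1 (hG2le _) (hG2nonneg _) (le_of_lt (htpos n))
        linarith
      have := ge_of_tendsto' hseq hbound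
      linarith
    -- q belongs to M
    have hqTnorm : ‖q.2 (T q.1)‖ ≤ ‖T‖ := by
      calc ‖q.2 (T q.1)‖ ≤ ‖q.2‖ * ‖T q.1‖ := q.2.le_opNorm _
        _ = ‖T q.1‖ := by rw [hq2, one_mul]
        _ ≤ ‖T‖ := T.unit_le_opNorm _ hq1.le
    have hre : re (q.2 (T q.1)) = ‖T‖ :=
      le_antisymm (le_trans (re_le_norm _) hqTnorm) hTq
    have hval : q.2 (T q.1) = (‖T‖ : 𝕜) := by
      have h1 : ‖q.2 (T q.1)‖ ≤ re (q.2 (T q.1)) := by rw [hre]; exact hqTnorm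
      have h2 := re_eq_self_of_le h1
      rw [← h2, hre]
    have hTq1 : ‖T q.1‖ = ‖T‖ := by
      refine le_antisymm (T.unit_le_opNorm _ hq1.le) ?_
      calc ‖T‖ = re (q.2 (T q.1)) := hre.symm
        _ ≤ ‖q.2 (T q.1)‖ := re_le_norm _
        _ ≤ ‖q.2‖ * ‖T q.1‖ := q.2.le_opNorm _
        _ = ‖T q.1‖ := by rw [hq2, one_mul]
    have hqM : q ∈ M := ⟨hq1, hTq1, hq2, hval⟩
    -- contradiction
    have hneg : re (b * q.2 (A q.1)) < u := hM_neg q hqM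
    have hpos : 0 ≤ re (b * q.2 (A q.1)) :=
      ge_of_tendsto' l2 fun n => hG2nonneg (φ n)
    linarith
  · -- backward direction
    intro h0 lam
    set c : ℝ := ‖T + lam • A‖ - ‖T‖ with hc
    have hsub : S ⊆ {z : 𝕜 | re (lam * z) ≤ c} := by
      rintro z ⟨x, y, hx1, hx2, hy1, hy2, rfl⟩
      have hexp : y ((T + lam • A) x) = (‖T‖ : 𝕜) + lam * y (A x) := by
        rw [ContinuousLinearMap.add_apply, ContinuousLinearMap.smul_apply, map_add,
          map_smul, smul_eq_mul, hy2]
      have h1 : ‖T‖ + re (lam * y (A x)) ≤ ‖T + lam • A‖ := by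
        have h2 : re (y ((T + lam • A) x)) ≤ ‖T + lam • A‖ := by
          refine le_trans (re_le_norm _) ?_
          calc ‖y ((T + lam • A) x)‖ ≤ ‖y‖ * ‖(T + lam • A) x‖ := y.le_opNorm _
            _ = ‖(T + lam • A) x‖ := by rw [hy1, one_mul]
            _ ≤ ‖T + lam • A‖ := (T + lam • A).unit_le_opNorm _ hx1.le
        rw [hexp, map_add, ofReal_re] at h2
        exact h2
      simp only [Set.mem_setOf_eq, hc]
      linarith
    have hconvex : Convex ℝ {z : 𝕜 | re (lam * z) ≤ c} := by
      refine convex_halfSpace_le ?_ c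
      constructor
      · intro a b'
        rw [mul_add, map_add]
      · intro r a
        rw [mul_smul_comm, smul_re, smul_eq_mul]
    have h1 : (0 : 𝕜) ∈ {z : 𝕜 | re (lam * z) ≤ c} :=
      convexHull_min hsub hconvex h0
    simp only [Set.mem_setOf_eq, mul_zero, map_zero, hc] at h1
    linarith
end

section
/- Let H be a finite-dimensional Hilbert space and let T, A be nonzero linear operators on H. Then T ⊥_B A if and only if there exists a unit vector x₀ ∈ H with ‖T x₀‖ = ‖T‖ and ⟨A x₀, T x₀⟩ = 0. -/
set_option linter.unusedSectionVars false

section BhatiaSemrl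
variable {𝕜 H : Type*} [RCLike 𝕜] [NormedAddCommGroup H]
    [InnerProductSpace 𝕜 H] [FiniteDimensional 𝕜 H]

local notation "⟪" x ", " y "⟫" => @inner 𝕜 _ _ x y

lemma bs_exists_max [Nontrivial H] (T : H →L[𝕜] H) :
    ∃ x : H, ‖x‖ = 1 ∧ ‖T x‖ = ‖T‖ := by
  haveI : ProperSpace H := FiniteDimensional.proper 𝕜 H
  have hsc : IsCompact (Metric.sphere (0:H) 1) := isCompact_sphere 0 1
  have hne : (Metric.sphere (0:H) 1).Nonempty := by
    obtain ⟨⟨x, hx⟩⟩ := NormedSpace.sphere_nonempty_rclike 𝕜 (E := H) zero_le_one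
    exact ⟨x, hx⟩
  obtain ⟨x, hx, hmax⟩ := hsc.exists_isMaxOn hne (T.continuous.norm.continuousOn)
  have hx1 : ‖x‖ = 1 := by simpa using hx
  refine ⟨x, hx1, le_antisymm (by simpa [hx1] using T.le_opNorm x) ?_⟩
  refine T.opNorm_le_bound (norm_nonneg _) (fun y => ?_)
  rcases eq_or_ne y 0 with rfl | hy
  · simp
  · have hy' : ‖y‖ ≠ 0 := norm_ne_zero_iff.2 hy
    have hmem : ((‖y‖:𝕜)⁻¹ • y) ∈ Metric.sphere (0:H) 1 := by
      simp [norm_smul, inv_mul_cancel₀ hy']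
    have this : ‖y‖⁻¹ * ‖T y‖ ≤ ‖T x‖ := by
      simpa [norm_smul, abs_of_nonneg (norm_nonneg y)] using hmax hmem
    calc ‖T y‖ = ‖y‖ * (‖y‖⁻¹ * ‖T y‖) := by field_simp
    _ ≤ ‖y‖ * ‖T x‖ := by
        apply mul_le_mul_of_nonneg_left _ (norm_nonneg y)
        simpa using this
    _ = ‖T x‖ * ‖y‖ := mul_comm _ _

/-- the maximizing set is closed under addition -/

lemma bs_H0_add (T : H →L[𝕜] H) {x y : H} (hx : ‖T x‖ = ‖T‖ * ‖x‖)
    (hy : ‖T y‖ = ‖T‖ * ‖y‖) : ‖T (x + y)‖ = ‖T‖ * ‖x + y‖ := by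
  have hpar := parallelogram_law_with_norm 𝕜 (T x) (T y)
  have hpar' := parallelogram_law_with_norm 𝕜 x y
  rw [← map_add, ← map_sub] at hpar
  have h1 : ‖T (x + y)‖ ≤ ‖T‖ * ‖x + y‖ := T.le_opNorm _
  have h2 : ‖T (x - y)‖ ≤ ‖T‖ * ‖x - y‖ := T.le_opNorm _
  have h1' : ‖T (x+y)‖ * ‖T (x+y)‖ ≤ (‖T‖ * ‖x+y‖) * (‖T‖ * ‖x+y‖) :=
    mul_self_le_mul_self (norm_nonneg _) h1
  have h2' : ‖T (x-y)‖ * ‖T (x-y)‖ ≤ (‖T‖ * ‖x-y‖) * (‖T‖ * ‖x-y‖) :=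
    mul_self_le_mul_self (norm_nonneg _) h2
  have hpar2 : (‖T‖*‖x+y‖) * (‖T‖*‖x+y‖) + (‖T‖*‖x-y‖) * (‖T‖*‖x-y‖)
      = 2 * ((‖T‖*‖x‖) * (‖T‖*‖x‖) + (‖T‖*‖y‖) * (‖T‖*‖y‖)) := by
    have := congrArg (fun r => ‖T‖ * ‖T‖ * r) hpar'
    ring_nf
    ring_nf at this
    linarith
  rw [hx, hy] at hpar
  have key : ‖T (x+y)‖ * ‖T (x+y)‖ = (‖T‖ * ‖x+y‖) * (‖T‖ * ‖x+y‖) := by linarith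
  rcases mul_self_eq_mul_self_iff.1 key with h | h
  · exact h
  · have h0 : ‖T (x+y)‖ = 0 := by
      nlinarith [norm_nonneg (T (x+y)), mul_nonneg (norm_nonneg T) (norm_nonneg (x+y))]
    have h0' : ‖T‖ * ‖x+y‖ = 0 := by nlinarith
    rw [h0, h0']


lemma bs_directional [Nontrivial H] (T A : H →L[𝕜] H)
    (horth : ∀ lam : 𝕜, ‖T‖ ≤ ‖T + lam • A‖) (c : 𝕜) (hc : ‖c‖ = 1) :
    ∃ x : H, ‖x‖ = 1 ∧ ‖T x‖ = ‖T‖ ∧ 0 ≤ RCLike.re (c * ⟪T x, A x⟫) := by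
  haveI : ProperSpace H := FiniteDimensional.proper 𝕜 H
  -- choose maximizers
  have hch : ∀ n : ℕ, ∃ x : H, ‖x‖ = 1 ∧
      ‖(T + (((n:𝕜)+1)⁻¹ * c) • A) x‖ = ‖T + (((n:𝕜)+1)⁻¹ * c) • A‖ :=
    fun n => bs_exists_max _
  choose u hu1 hu2 using hch
  set t : ℕ → ℝ := fun n => ((n:ℝ)+1)⁻¹ with ht
  have htpos : ∀ n, 0 < t n := fun n => by positivity
  have hnormlam : ∀ n : ℕ, ‖((n:𝕜)+1)⁻¹ * c‖ = t n := by
    intro n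
    rw [norm_mul, norm_inv, hc, mul_one, ht]
    have hcast : ((n:𝕜)+1) = (((n+1:ℕ)):𝕜) := by push_cast; ring
    rw [hcast, RCLike.norm_natCast]
    push_cast
    ring
  -- estimate 1 : ‖T (u n)‖ ≥ ‖T‖ - t n * ‖A‖
  have est1 : ∀ n, ‖T‖ - t n * ‖A‖ ≤ ‖T (u n)‖ := by
    intro n
    have h1 : ‖T‖ ≤ ‖(T + (((n:𝕜)+1)⁻¹ * c) • A) (u n)‖ := by
      rw [hu2 n]; exact horth _
    have h2 : ‖(T + (((n:𝕜)+1)⁻¹ * c) • A) (u n)‖ ≤ ‖T (u n)‖ + t n * ‖A‖ := by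
      calc ‖(T + (((n:𝕜)+1)⁻¹ * c) • A) (u n)‖
          = ‖T (u n) + (((n:𝕜)+1)⁻¹ * c) • A (u n)‖ := by
            simp [ContinuousLinearMap.add_apply]
        _ ≤ ‖T (u n)‖ + ‖(((n:𝕜)+1)⁻¹ * c) • A (u n)‖ := norm_add_le _ _
        _ ≤ ‖T (u n)‖ + t n * ‖A‖ := by
            gcongr
            rw [norm_smul, hnormlam n]
            have : ‖A (u n)‖ ≤ ‖A‖ := by
              simpa [hu1 n] using A.le_opNorm (u n)
            exact mul_le_mul_of_nonneg_left this (htpos n).le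
    linarith
  -- estimate 2
  have est2 : ∀ n, -(t n * ‖A‖^2 / 2) ≤ RCLike.re (c * ⟪T (u n), A (u n)⟫) := by
    intro n
    have h1 : ‖T‖ ≤ ‖(T + (((n:𝕜)+1)⁻¹ * c) • A) (u n)‖ := by
      rw [hu2 n]; exact horth _
    have hTu : ‖T (u n)‖ ≤ ‖T‖ := by simpa [hu1 n] using T.le_opNorm (u n)
    have hAu : ‖A (u n)‖ ≤ ‖A‖ := by simpa [hu1 n] using A.le_opNorm (u n)
    have hexp : ‖(T + (((n:𝕜)+1)⁻¹ * c) • A) (u n)‖^2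
        = ‖T (u n)‖^2 + 2 * (t n * RCLike.re (c * ⟪T (u n), A (u n)⟫))
          + (t n)^2 * ‖A (u n)‖^2 := by
      have : (T + (((n:𝕜)+1)⁻¹ * c) • A) (u n)
          = T (u n) + (((n:𝕜)+1)⁻¹ * c) • A (u n) := by
        simp [ContinuousLinearMap.add_apply]
      rw [this, @norm_add_sq 𝕜, inner_smul_right]
      have hre : RCLike.re ((((n:𝕜)+1)⁻¹ * c) * ⟪T (u n), A (u n)⟫)
          = t n * RCLike.re (c * ⟪T (u n), A (u n)⟫) := by
        rw [mul_assoc]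
        rw [show (((n:𝕜)+1)⁻¹ : 𝕜) = ((t n : ℝ) : 𝕜) by push_cast [ht]; norm_num]
        rw [RCLike.re_ofReal_mul]
      rw [hre, norm_smul, hnormlam n]
      ring
    have hsq : ‖T‖^2 ≤ ‖T (u n)‖^2 + 2 * (t n * RCLike.re (c * ⟪T (u n), A (u n)⟫))
          + (t n)^2 * ‖A (u n)‖^2 := by
      rw [← hexp]
      exact pow_le_pow_left₀ (norm_nonneg _) h1 2
    have hTu2 : ‖T (u n)‖^2 ≤ ‖T‖^2 := pow_le_pow_left₀ (norm_nonneg _) hTu 2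
    have hAu2 : ‖A (u n)‖^2 ≤ ‖A‖^2 := pow_le_pow_left₀ (norm_nonneg _) hAu 2
    have htn1 : t n ≤ 1 := by
      rw [ht]
      exact inv_le_one_of_one_le₀ (le_add_of_nonneg_left (Nat.cast_nonneg n))
    nlinarith [htpos n, sq_nonneg (t n)]
  -- pass to a convergent subsequence
  have humem : ∀ n, u n ∈ Metric.sphere (0:H) 1 := fun n => by simp [hu1 n]
  obtain ⟨x, hxs, φ, hφ, hconv⟩ := (isCompact_sphere (0:H) 1).tendsto_subseq humem
  have hx1 : ‖x‖ = 1 := by simpa using hxs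
  have htend0 : Filter.Tendsto t Filter.atTop (nhds 0) := by
    have := tendsto_one_div_add_atTop_nhds_zero_nat (𝕜 := ℝ)
    simpa [ht, one_div] using this
  have hmono : ∀ n, t (φ n) ≤ t n := by
    intro n
    apply inv_anti₀ (by positivity)
    have h := hφ.le_apply (x := n)
    have : (n:ℝ) ≤ (φ n : ℝ) := Nat.cast_le.2 h
    linarith
  refine ⟨x, hx1, ?_, ?_⟩
  · have hub : ‖T x‖ ≤ ‖T‖ := by simpa [hx1] using T.le_opNorm x
    have hlim : Filter.Tendsto (fun n => ‖T (u (φ n))‖) Filter.atTop (nhds ‖T x‖) :=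
      ((T.continuous.norm).tendsto x).comp hconv
    have hlim2 : Filter.Tendsto (fun n => ‖T‖ - t n * ‖A‖) Filter.atTop (nhds ‖T‖) := by
      have : Filter.Tendsto (fun n => t n * ‖A‖) Filter.atTop (nhds 0) := by
        simpa using htend0.mul_const ‖A‖
      simpa using tendsto_const_nhds.sub this
    have hle : ‖T‖ ≤ ‖T x‖ := by
      refine le_of_tendsto_of_tendsto' hlim2 hlim (fun n => ?_)
      have h1 := est1 (φ n)
      have h2 : t (φ n) * ‖A‖ ≤ t n * ‖A‖ :=
        mul_le_mul_of_nonneg_right (hmono n) (norm_nonneg A)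
      linarith
    linarith
  · have hlim : Filter.Tendsto (fun n => RCLike.re (c * ⟪T (u (φ n)), A (u (φ n))⟫))
        Filter.atTop (nhds (RCLike.re (c * ⟪T x, A x⟫))) := by
      have hcont : Continuous fun z : H => RCLike.re (c * ⟪T z, A z⟫) :=
        RCLike.continuous_re.comp (continuous_const.mul (T.continuous.inner A.continuous))
      exact (hcont.tendsto x).comp hconv
    have hlim2 : Filter.Tendsto (fun n => -(t n * ‖A‖^2 / 2)) Filter.atTop (nhds 0) := by
      have : Filter.Tendsto (fun n => t n * ‖A‖^2 / 2) Filter.atTop (nhds 0) := by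
        simpa using (htend0.mul_const (‖A‖^2)).div_const 2
      simpa using this.neg
    refine le_of_tendsto_of_tendsto' hlim2 hlim (fun n => ?_)
    have h1 := est2 (φ n)
    have h2 : t (φ n) * ‖A‖^2 / 2 ≤ t n * ‖A‖^2 / 2 := by
      have := mul_le_mul_of_nonneg_right (hmono n) (sq_nonneg ‖A‖)
      linarith
    linarith


lemma bs_expand (p₁ p₂ q₁ q₂ : H) (t t' : ℝ) :
    ⟪(t:𝕜)•p₁ + (t':𝕜)•q₁, (t:𝕜)•p₂ + (t':𝕜)•q₂⟫
      = ((t*t :ℝ):𝕜)*⟪p₁, p₂⟫ + ((t*t':ℝ):𝕜)*(⟪p₁, q₂⟫+⟪q₁, p₂⟫)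
        + ((t'*t':ℝ):𝕜)*⟪q₁, q₂⟫ := by
  simp only [inner_add_left, inner_add_right, inner_smul_left,
    inner_smul_right, RCLike.conj_ofReal]
  push_cast
  ring


lemma bs_convex (T A : H →L[𝕜] H) {x y : H}
    (hx1 : ‖x‖ = 1) (hy1 : ‖y‖ = 1) (hxM : ‖T x‖ = ‖T‖) (hyM : ‖T y‖ = ‖T‖)
    {s : ℝ} (hs0 : 0 ≤ s) (hs1 : s ≤ 1) :
    ∃ z : H, ‖z‖ = 1 ∧ ‖T z‖ = ‖T‖ ∧
      ⟪T z, A z⟫ = ⟪T y, A y⟫ + (s:𝕜) * (⟪T x, A x⟫ - ⟪T y, A y⟫) := by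
  set a : 𝕜 := ⟪T x, A x⟫ with ha
  set b : 𝕜 := ⟪T y, A y⟫ with hb
  rcases eq_or_ne a b with hab | hab
  · exact ⟨x, hx1, hxM, by rw [← ha, hab]; ring⟩
  have he : a - b ≠ 0 := sub_ne_zero.2 hab
  set e : 𝕜 := a - b with hedef
  set β : 𝕜 := (⟪T x, A y⟫ - b*⟪x,y⟫)/e with hβ
  set γ : 𝕜 := (⟪T y, A x⟫ - b*⟪y,x⟫)/e with hγ
  set d : 𝕜 := β - (starRingEnd 𝕜) γ with hd
  set u : 𝕜 := if d = 0 then 1 else (starRingEnd 𝕜) d * (‖d‖:𝕜)⁻¹ with hu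
  have hu1 : ‖u‖ = 1 := by
    rw [hu]
    split_ifs with h
    · simp
    · rw [norm_mul, norm_inv, RCLike.norm_conj, RCLike.norm_ofReal, abs_of_nonneg (norm_nonneg d)]
      field_simp [norm_ne_zero_iff.2 h]
  have hud : (starRingEnd 𝕜) (u * d) = u * d := by
    rcases eq_or_ne d 0 with h | h
    · simp [h]
    · have hval : u * d = ((‖d‖:ℝ):𝕜) := by
        rw [hu, if_neg h, mul_assoc, mul_comm ((‖d‖:𝕜)⁻¹) d, ← mul_assoc, RCLike.conj_mul]
        rw [sq]
        have hd0 : (‖d‖:𝕜) ≠ 0 := by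
          simpa using norm_ne_zero_iff.2 h
        field_simp
      rw [hval, RCLike.conj_ofReal]
  -- K' is real
  set K' : 𝕜 := u * β + (starRingEnd 𝕜) u * γ with hK'
  have hK'real : (starRingEnd 𝕜) K' = K' := by
    have h1 : K' - (starRingEnd 𝕜) K' = u * d - (starRingEnd 𝕜) (u * d) := by
      rw [hK', hd]
      simp only [map_add, map_mul, map_sub, RCLike.conj_conj]
      ring
    rw [hud] at h1
    have : K' - (starRingEnd 𝕜) K' = 0 := by rw [h1]; ring
    linear_combination -this
  set K : ℝ := RCLike.re K' with hK
  have hKK : (K:𝕜) = K' := RCLike.conj_eq_iff_re.1 hK'real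
  -- the rotated second vector
  set y' : H := u • y with hy'
  have hy'1 : ‖y'‖ = 1 := by rw [hy', norm_smul, hu1, hy1, one_mul]
  have hy'M : ‖T y'‖ = ‖T‖ := by rw [hy', map_smul, norm_smul, hu1, one_mul, hyM]
  have huu : (starRingEnd 𝕜) u * u = 1 := by
    rw [RCLike.conj_mul, hu1]; norm_num
  have c3 : ⟪T y', A y'⟫ = b := by
    rw [hy', map_smul, map_smul, inner_smul_left, inner_smul_right, ← mul_assoc, huu, one_mul, hb]
  have hbracket : (u*⟪T x, A y⟫ + (starRingEnd 𝕜) u*⟪T y, A x⟫)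
      - b*(u*⟪x,y⟫ + (starRingEnd 𝕜) u*⟪y,x⟫) = e * K' := by
    rw [hK', hβ, hγ]
    field_simp
    ring
  -- the path
  set z : ℝ → H := fun t => (t:𝕜)•x + ((1-t : ℝ):𝕜)•y' with hz
  have hzz : ∀ t : ℝ, ⟪z t, z t⟫ = ((‖z t‖^2 : ℝ) : 𝕜) := by
    intro t
    rw [inner_self_eq_norm_sq_to_K]
    push_cast
    ring
  have hTz : ∀ t : ℝ, ⟪T (z t), A (z t)⟫
      = b * ⟪z t, z t⟫ + e * (((t*t:ℝ):𝕜) + ((t*(1-t):ℝ):𝕜) * K') := by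
    intro t
    have happ : ∀ B : H →L[𝕜] H, B (z t) = (t:𝕜)•(B x) + ((1-t : ℝ):𝕜)•(B y') := by
      intro B
      simp only [hz]
      rw [map_add, ContinuousLinearMap.map_smul, ContinuousLinearMap.map_smul]
    have e1 : ⟪T (z t), A (z t)⟫ = ((t*t :ℝ):𝕜)*⟪T x, A x⟫
        + ((t*(1-t):ℝ):𝕜)*(⟪T x, A y'⟫+⟪T y', A x⟫) + (((1-t)*(1-t):ℝ):𝕜)*⟪T y', A y'⟫ := by
      rw [happ T, happ A]; exact bs_expand _ _ _ _ _ _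
    have e2 : ⟪z t, z t⟫ = ((t*t :ℝ):𝕜)*⟪x, x⟫
        + ((t*(1-t):ℝ):𝕜)*(⟪x, y'⟫+⟪y', x⟫) + (((1-t)*(1-t):ℝ):𝕜)*⟪y', y'⟫ := by
      rw [hz]; exact bs_expand _ _ _ _ _ _
    have cxx : ⟪x, x⟫ = (1:𝕜) := by
      rw [inner_self_eq_norm_sq_to_K, hx1]; norm_num
    have cyy : ⟪y', y'⟫ = (1:𝕜) := by
      rw [inner_self_eq_norm_sq_to_K, hy'1]; norm_num
    have cxy : ⟪T x, A y'⟫ = u * ⟪T x, A y⟫ := by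
      rw [hy', map_smul, inner_smul_right]
    have cyx : ⟪T y', A x⟫ = (starRingEnd 𝕜) u * ⟪T y, A x⟫ := by
      rw [hy', map_smul, inner_smul_left]
    have cxy' : ⟪x, y'⟫ = u * ⟪x, y⟫ := by rw [hy', inner_smul_right]
    have cyx' : ⟪y', x⟫ = (starRingEnd 𝕜) u * ⟪y, x⟫ := by rw [hy', inner_smul_left]
    rw [e1, e2, cxx, cyy, cxy, cyx, cxy', cyx', c3]
    rw [← ha]
    linear_combination ((t*(1-t):ℝ):𝕜) * hbracket + ((t*t:ℝ):𝕜) * (hedef)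
  -- nonvanishing of the path
  have hz0 : ∀ t ∈ Set.Icc (0:ℝ) 1, z t ≠ 0 := by
    rintro t ⟨ht0, ht1⟩ h0
    have hnx : ‖(t:𝕜)•x‖ = t := by
      rw [norm_smul, hx1, mul_one, RCLike.norm_ofReal, abs_of_nonneg ht0]
    have hny : ‖((1-t : ℝ):𝕜)•y'‖ = 1 - t := by
      rw [norm_smul, hy'1, mul_one, RCLike.norm_ofReal, abs_of_nonneg (by linarith)]
    have hteq : t = 1 - t := by
      have h1 : (t:𝕜)•x = -(((1-t : ℝ):𝕜)•y') := by
        rw [eq_neg_iff_add_eq_zero]; exact h0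
      have := congrArg norm h1
      rw [hnx, norm_neg, hny] at this
      exact this
    have ht2 : t = 1/2 := by linarith
    have hxy : x = -y' := by
      have h2 : (t:𝕜) • (x + y') = 0 := by
        rw [smul_add]
        have h3 : ((1-t:ℝ):𝕜) = (t:𝕜) := by rw [← hteq]
        simp only [hz] at h0
        rw [h3] at h0
        exact h0
      have hne : ((t:ℝ):𝕜) ≠ 0 := by
        rw [ht2]; norm_num
      have h4 := (smul_eq_zero.1 h2).resolve_left hne
      exact add_eq_zero_iff_eq_neg.1 h4
    apply hab
    rw [ha, hb, hxy, map_neg, map_neg, inner_neg_neg, ← hb, c3]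
  -- continuity of the path
  have hzcont : Continuous z := by
    rw [hz]
    exact ((RCLike.continuous_ofReal).smul continuous_const).add
      ((RCLike.continuous_ofReal.comp (continuous_const.sub continuous_id)).smul continuous_const)
  -- the real-valued function for IVT
  set h : ℝ → ℝ := fun t => (t*t + t*(1-t)*K)/‖z t‖^2 with hhdef
  have hcont : ContinuousOn h (Set.Icc 0 1) := by
    apply ContinuousOn.div
    · fun_prop
    · exact ((hzcont.norm).pow 2).continuousOn
    · intro t ht
      exact pow_ne_zero 2 (norm_ne_zero_iff.2 (hz0 t ht))
  have hzval0 : z 0 = y' := by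
    simp [hz]
  have hzval1 : z 1 = x := by
    simp [hz]
  have h0 : h 0 = 0 := by simp [hhdef]
  have h1 : h 1 = 1 := by
    rw [hhdef]
    simp [hzval1, hx1]
  have hsmem : s ∈ Set.Icc (h 0) (h 1) := by
    rw [h0, h1]; exact ⟨hs0, hs1⟩
  obtain ⟨t, htmem, hts⟩ := intermediate_value_Icc (zero_le_one) hcont hsmem
  -- the witness
  set N : ℝ := ‖z t‖ with hN
  have hN0 : N ≠ 0 := norm_ne_zero_iff.2 (hz0 t htmem)
  have hN0' : ((N:ℝ):𝕜) ≠ 0 := by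
    simpa using hN0
  refine ⟨((N⁻¹:ℝ):𝕜) • z t, ?_, ?_, ?_⟩
  · rw [norm_smul, RCLike.norm_ofReal, abs_of_nonneg (inv_nonneg.2 (norm_nonneg _)),
      ← hN, inv_mul_cancel₀ hN0]
  · have hpx : ‖T ((t:𝕜)•x)‖ = ‖T‖ * ‖(t:𝕜)•x‖ := by
      rw [ContinuousLinearMap.map_smul, norm_smul, norm_smul, hxM, hx1]; ring
    have hpy : ‖T (((1-t:ℝ):𝕜)•y')‖ = ‖T‖ * ‖((1-t:ℝ):𝕜)•y'‖ := by
      rw [ContinuousLinearMap.map_smul, norm_smul, norm_smul, hy'M, hy'1]; ring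
    have hzMt : ‖T (z t)‖ = ‖T‖ * N := by
      rw [hN]
      simp only [hz]
      exact bs_H0_add T hpx hpy
    rw [ContinuousLinearMap.map_smul, norm_smul, RCLike.norm_ofReal,
      abs_of_nonneg (inv_nonneg.2 (norm_nonneg _)), hzMt]
    field_simp
    rw [← hN, mul_div_assoc, div_self hN0, mul_one]
  · have hreal : t*t + t*(1-t)*K = s * N^2 := by
      have := hts
      rw [hhdef] at this
      field_simp [norm_ne_zero_iff.2 (hz0 t htmem)] at this
      rw [hN]
      linarith [this]
    have hcast : ((t*t:ℝ):𝕜) + ((t*(1-t):ℝ):𝕜)*(K:𝕜) = (s:𝕜) * ((N:ℝ):𝕜)^2 := by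
      have h5 := congrArg (fun r : ℝ => (r:𝕜)) hreal
      push_cast at h5 ⊢
      linear_combination h5
    have hval : ⟪T (((N⁻¹:ℝ):𝕜) • z t), A (((N⁻¹:ℝ):𝕜) • z t)⟫
        = ((N⁻¹:ℝ):𝕜) * ((N⁻¹:ℝ):𝕜) * ⟪T (z t), A (z t)⟫ := by
      rw [ContinuousLinearMap.map_smul, ContinuousLinearMap.map_smul,
        inner_smul_left, inner_smul_right, RCLike.conj_ofReal]
      ring
    rw [hval, hTz t, hzz t, ← hKK, ← hN]
    have hNcast : ((N^2:ℝ):𝕜) = ((N:ℝ):𝕜)^2 := by push_cast; ring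
    have hNinv : ((N⁻¹:ℝ):𝕜) = ((N:ℝ):𝕜)⁻¹ := by push_cast; ring
    rw [hNcast, hNinv]
    field_simp
    push_cast at hcast ⊢
    linear_combination hcast * e


end BhatiaSemrl

theorem stmt8 {𝕜 H : Type*} [RCLike 𝕜] [NormedAddCommGroup H]
    [InnerProductSpace 𝕜 H] [FiniteDimensional 𝕜 H]
    (T A : H →L[𝕜] H) (hT : T ≠ 0) (hA : A ≠ 0) :
    (∀ lam : 𝕜, ‖T‖ ≤ ‖T + lam • A‖) ↔
      ∃ x₀ : H, ‖x₀‖ = 1 ∧ ‖T x₀‖ = ‖T‖ ∧ (inner 𝕜 (A x₀) (T x₀) : 𝕜) = 0 := by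
  have hTnorm : (0:ℝ) < ‖T‖ := norm_pos_iff.2 hT
  constructor
  · intro horth
    -- H is nontrivial
    have hnt : Nontrivial H := by
      obtain ⟨v, hv⟩ : ∃ v, T v ≠ 0 := by
        by_contra hcon
        push_neg at hcon
        exact hT (ContinuousLinearMap.ext fun v => by simp [hcon v])
      exact nontrivial_of_ne v 0 (fun h => hv (by simp [h]))
    classical
    -- the "restricted numerical range"
    set S : Set H := {x | ‖x‖ = 1 ∧ ‖T x‖ = ‖T‖} with hS
    set W : Set 𝕜 := (fun x => (inner 𝕜 (T x) (A x) : 𝕜)) '' S with hW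
    have hScompact : IsCompact S := by
      have h1 : S = Metric.sphere (0:H) 1 ∩ {x | ‖T x‖ = ‖T‖} := by
        ext x
        simp [hS, Metric.mem_sphere, dist_zero_right]
      rw [h1]
      haveI : ProperSpace H := FiniteDimensional.proper 𝕜 H
      exact (isCompact_sphere 0 1).inter_right
        (isClosed_eq (T.continuous.norm) continuous_const)
    have hWcompact : IsCompact W :=
      hScompact.image (Continuous.inner (T.continuous) (A.continuous))
    have hWne : W.Nonempty := by
      obtain ⟨x, hx1, hxM⟩ := bs_exists_max T
      exact ⟨_, ⟨x, ⟨hx1, hxM⟩, rfl⟩⟩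
    -- main claim : 0 ∈ W
    have h0W : (0:𝕜) ∈ W := by
      obtain ⟨w₀, hw₀W, hmin⟩ := hWcompact.exists_isMinOn hWne continuous_norm.continuousOn
      rcases eq_or_ne w₀ 0 with rfl | hw₀ne
      · exact hw₀W
      exfalso
      -- every w in W has re (conj w₀ * w) ≥ ‖w₀‖²
      have hkey : ∀ w ∈ W, ‖w₀‖^2 ≤ RCLike.re ((starRingEnd 𝕜) w₀ * w) := by
        intro w hwW
        by_contra hlt
        push_neg at hlt
        set r : ℝ := RCLike.re ((starRingEnd 𝕜) w₀ * (w - w₀)) with hr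
        have hrneg : r < 0 := by
          have : RCLike.re ((starRingEnd 𝕜) w₀ * w₀) = ‖w₀‖^2 := by
            rw [RCLike.conj_mul, ← RCLike.ofReal_pow, RCLike.ofReal_re]
          rw [hr, mul_sub, map_sub, this]
          linarith
        set sq : ℝ := ‖w - w₀‖^2 with hsq
        have hsqnn : 0 ≤ sq := sq_nonneg _
        set t : ℝ := min 1 (-(2*r)/(sq+1)) with htdef
        have ht0 : 0 < t := by
          apply lt_min one_pos
          apply div_pos (by linarith) (by positivity)
        have ht1 : t ≤ 1 := min_le_left _ _
        -- the convex combination is in W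
        obtain ⟨xw, hxwS, hxweq⟩ := hwW
        obtain ⟨x0, hx0S, hx0eq⟩ := hw₀W
        replace hx0eq : (inner 𝕜 (T x0) (A x0) : 𝕜) = w₀ := hx0eq
        replace hxweq : (inner 𝕜 (T xw) (A xw) : 𝕜) = w := hxweq
        obtain ⟨z, hz1, hzM, hzval⟩ := bs_convex T A hxwS.1 hx0S.1 hxwS.2 hx0S.2 ht0.le ht1
        rw [hx0eq, hxweq] at hzval
        have hzW : w₀ + (t:𝕜) * (w - w₀) ∈ W := ⟨z, ⟨hz1, hzM⟩, hzval⟩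
        have hnle : ‖w₀‖ ≤ ‖w₀ + (t:𝕜) * (w - w₀)‖ := hmin hzW
        have hexp : ‖w₀ + (t:𝕜) * (w - w₀)‖^2 = ‖w₀‖^2 + 2 * (t * r) + t^2 * sq := by
          have := norm_add_sq (𝕜 := 𝕜) (E := 𝕜) w₀ ((t:𝕜) * (w - w₀))
          rw [this, RCLike.inner_apply]
          have h2 : ((t:𝕜) * (w - w₀)) * (starRingEnd 𝕜) w₀
              = (t:𝕜) * ((starRingEnd 𝕜) w₀ * (w - w₀)) := by ring
          rw [h2, RCLike.re_ofReal_mul, norm_mul, RCLike.norm_ofReal,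
            abs_of_nonneg ht0.le, ← hr]
          rw [hsq]
          ring
        have hsqle : ‖w₀‖^2 ≤ ‖w₀ + (t:𝕜) * (w - w₀)‖^2 :=
          pow_le_pow_left₀ (norm_nonneg _) hnle 2
        rw [hexp] at hsqle
        -- contradiction by choice of t
        have hts : t * sq ≤ -(2*r) - t := by
          have h3 : t ≤ -(2*r)/(sq+1) := min_le_right _ _
          have h4 : t * (sq+1) ≤ -(2*r) := by
            rw [div_eq_mul_inv] at h3
            have := mul_le_mul_of_nonneg_right h3 (le_of_lt (by positivity : (0:ℝ) < sq+1))
            rwa [mul_assoc, inv_mul_cancel₀ (by positivity : sq+1 ≠ 0), mul_one] at this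
          have h5 : t*(sq+1) = t*sq + t := by ring
          linarith
        nlinarith [mul_le_mul_of_nonneg_left hts ht0.le, sq_nonneg t, ht0]
      -- contradiction with the directional property
      have hcnorm : ‖-((starRingEnd 𝕜) w₀) * ((‖w₀‖:ℝ):𝕜)⁻¹‖ = 1 := by
        rw [norm_mul, norm_neg, RCLike.norm_conj, norm_inv, RCLike.norm_ofReal,
          abs_of_nonneg (norm_nonneg _), mul_inv_cancel₀ (norm_ne_zero_iff.2 hw₀ne)]
      obtain ⟨x, hx1, hxM, hxre⟩ := bs_directional T A horth _ hcnorm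
      have hwW : (inner 𝕜 (T x) (A x) : 𝕜) ∈ W := ⟨x, ⟨hx1, hxM⟩, rfl⟩
      have h5 := hkey _ hwW
      have h6 : RCLike.re (-((starRingEnd 𝕜) w₀) * ((‖w₀‖:ℝ):𝕜)⁻¹ * (inner 𝕜 (T x) (A x) : 𝕜))
          = -(‖w₀‖⁻¹ * RCLike.re ((starRingEnd 𝕜) w₀ * (inner 𝕜 (T x) (A x) : 𝕜))) := by
        have : -((starRingEnd 𝕜) w₀) * ((‖w₀‖:ℝ):𝕜)⁻¹ * (inner 𝕜 (T x) (A x) : 𝕜)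
            = ((‖w₀‖⁻¹:ℝ):𝕜) * (-((starRingEnd 𝕜) w₀ * (inner 𝕜 (T x) (A x) : 𝕜))) := by
          push_cast
          ring
        rw [this, RCLike.re_ofReal_mul, map_neg]
        ring
      have h7 : (0:ℝ) < ‖w₀‖^2 := pow_pos (norm_pos_iff.2 hw₀ne) 2
      have h8 : 0 < ‖w₀‖⁻¹ := inv_pos.2 (norm_pos_iff.2 hw₀ne)
      rw [h6] at hxre
      nlinarith
    obtain ⟨x, ⟨hx1, hxM⟩, hxval⟩ := h0W
    replace hxval : (inner 𝕜 (T x) (A x) : 𝕜) = 0 := hxval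
    refine ⟨x, hx1, hxM, ?_⟩
    rw [← inner_conj_symm (A x) (T x), hxval, map_zero]
  · rintro ⟨x₀, hx1, hxM, hinner⟩ lam
    have key : ‖T‖^2 ≤ ‖T + lam • A‖ * ‖T‖ := by
      have h1 : RCLike.re (inner 𝕜 ((T + lam • A) x₀) (T x₀) : 𝕜)
          ≤ ‖(T + lam • A) x₀‖ * ‖T x₀‖ := re_inner_le_norm _ _
      have h2 : ‖(T + lam • A) x₀‖ * ‖T x₀‖ ≤ ‖T + lam • A‖ * ‖T‖ := by
        rw [hxM]
        apply mul_le_mul_of_nonneg_right _ (norm_nonneg T)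
        simpa [hx1] using (T + lam • A).le_opNorm x₀
      have h3 : RCLike.re (inner 𝕜 ((T + lam • A) x₀) (T x₀) : 𝕜) = ‖T‖^2 := by
        have : (T + lam • A) x₀ = T x₀ + lam • (A x₀) := by
          simp [ContinuousLinearMap.add_apply]
        rw [this, inner_add_left, inner_smul_left, hinner, mul_zero, add_zero,
          inner_self_eq_norm_sq, hxM]
      linarith
    have hmul : ‖T‖ * ‖T‖ ≤ ‖T + lam • A‖ * ‖T‖ := by nlinarith
    exact le_of_mul_le_mul_right hmul hTnorm
end

section
/- Let X and Y be normed linear spaces over F, and let T be a nonzero bounded linear operator from X to Y. Then T is a smooth point of the space of bounded operators (i.e., Birkhoff-James orthogonality is right-additive at T) if and only if for every bounded linear operator A the set Ω(T,A) := { λ : ∃ ((xₙ, yₙ*)) with ‖xₙ‖ = ‖yₙ*‖ = 1, yₙ*(T xₙ) → ‖T‖, yₙ*(A xₙ) → λ } is a singleton. -/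
open Filter Topology

section Aux

variable {𝕜 X Y : Type*} [RCLike 𝕜] [NormedAddCommGroup X] [NormedSpace 𝕜 X]
    [NormedAddCommGroup Y] [NormedSpace 𝕜 Y]

def OmSet (T A : X →L[𝕜] Y) : Set 𝕜 :=
  {lam : 𝕜 | ∃ (x : ℕ → X) (y : ℕ → (Y →L[𝕜] 𝕜)),
    (∀ n, ‖x n‖ = 1) ∧ (∀ n, ‖y n‖ = 1) ∧
    Tendsto (fun n => y n (T (x n))) atTop (𝓝 (‖T‖ : 𝕜)) ∧
    Tendsto (fun n => y n (A (x n))) atTop (𝓝 lam)}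

/-- A unit vector nearly attaining the norm of `S`. -/
lemma exists_unit_lt_apply (S : X →L[𝕜] Y) {c : ℝ} (hc0 : 0 ≤ c) (hc : c < ‖S‖) :
    ∃ x : X, ‖x‖ = 1 ∧ c < ‖S x‖ := by
  obtain ⟨x, hx1, hx2⟩ := S.exists_lt_apply_of_lt_opNorm hc
  have hx0 : x ≠ 0 := by
    rintro rfl
    simpa using lt_of_le_of_lt hc0 hx2
  have hxn : (0:ℝ) < ‖x‖ := norm_pos_iff.mpr hx0
  refine ⟨((‖x‖ : 𝕜))⁻¹ • x, ?_, ?_⟩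
  · rw [norm_smul, norm_inv, RCLike.norm_ofReal, abs_of_pos hxn, inv_mul_cancel₀ hxn.ne']
  · rw [map_smul, norm_smul, norm_inv, RCLike.norm_ofReal, abs_of_pos hxn]
    calc c < ‖S x‖ := hx2
    _ = 1 * ‖S x‖ := (one_mul _).symm
    _ ≤ ‖x‖⁻¹ * ‖S x‖ := by
        gcongr
        exact (one_le_inv₀ hxn).mpr hx1.le

/-- Given any norming sequence for `T`, a subsequence realizes some `lam ∈ Ω(T,A)`. -/
lemma omset_subseq (T A : X →L[𝕜] Y) (x : ℕ → X) (y : ℕ → (Y →L[𝕜] 𝕜))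
    (hx : ∀ n, ‖x n‖ = 1) (hy : ∀ n, ‖y n‖ = 1)
    (hT : Tendsto (fun n => y n (T (x n))) atTop (𝓝 (‖T‖ : 𝕜))) :
    ∃ φ : ℕ → ℕ, StrictMono φ ∧ ∃ lam ∈ OmSet T A,
      Tendsto (fun n => y (φ n) (A (x (φ n)))) atTop (𝓝 lam) := by
  haveI : ProperSpace 𝕜 := FiniteDimensional.proper_rclike 𝕜 𝕜
  have hb : ∀ n, (y n (A (x n))) ∈ Metric.closedBall (0:𝕜) ‖A‖ := by
    intro n
    rw [Metric.mem_closedBall, dist_zero_right]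
    calc ‖y n (A (x n))‖ ≤ ‖y n‖ * ‖A (x n)‖ := (y n).le_opNorm _
    _ = ‖A (x n)‖ := by rw [hy n, one_mul]
    _ ≤ ‖A‖ * ‖x n‖ := A.le_opNorm _
    _ = ‖A‖ := by rw [hx n, mul_one]
  obtain ⟨lam, -, φ, hφ, hlim⟩ :=
    tendsto_subseq_of_bounded (Metric.isBounded_closedBall (x := (0:𝕜)) (r := ‖A‖)) hb
  refine ⟨φ, hφ, lam, ⟨x ∘ φ, y ∘ φ, fun n => hx _, fun n => hy _,
    hT.comp hφ.tendsto_atTop, hlim⟩, hlim⟩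

/-- `Ω(T,A)` is nonempty. -/
lemma omset_nonempty (T A : X →L[𝕜] Y) (hT : T ≠ 0) : (OmSet T A).Nonempty := by
  have hTp : (0:ℝ) < ‖T‖ := norm_pos_iff.mpr hT
  have key : ∀ n : ℕ, ∃ (x : X) (g : Y →L[𝕜] 𝕜), ‖x‖ = 1 ∧ ‖g‖ = 1 ∧
      g (T x) = (‖T x‖ : 𝕜) ∧ ‖T‖ - min (‖T‖/2) (1/(n+1)) < ‖T x‖ := by
    intro n
    have hmin : 0 < min (‖T‖/2) (1/(n+1)) := lt_min (by linarith) (by positivity)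
    obtain ⟨x, hx1, hx2⟩ := exists_unit_lt_apply T
      (c := ‖T‖ - min (‖T‖/2) (1/(n+1)))
      (by have := min_le_left (‖T‖/2) (1/(n+1:ℝ)); linarith) (by linarith)
    have hTx : T x ≠ 0 := by
      intro h
      rw [h, norm_zero] at hx2
      have := min_le_left (‖T‖/2) (1/(n+1:ℝ)); linarith
    obtain ⟨g, hg1, hg2⟩ := exists_dual_vector 𝕜 (T x) (norm_ne_zero_iff.mpr hTx)
    exact ⟨x, g, hx1, hg1, hg2, hx2⟩
  choose x y hx hy hxy hlow using key
  have hnormlim : Tendsto (fun n => ‖T (x n)‖) atTop (𝓝 ‖T‖) := by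
    have h1 : Tendsto (fun n : ℕ => ‖T‖ - min (‖T‖/2) (1/(n+1))) atTop (𝓝 ‖T‖) := by
      have : Tendsto (fun n : ℕ => min (‖T‖/2) (1/(n+1:ℝ))) atTop (𝓝 0) := by
        apply squeeze_zero (fun n => le_min (by linarith) (by positivity))
          (fun n => min_le_right _ _)
        exact tendsto_one_div_add_atTop_nhds_zero_nat
      simpa using (tendsto_const_nhds (x := ‖T‖)).sub this
    have h2 : ∀ n, ‖T (x n)‖ ≤ ‖T‖ := fun n => by
      calc ‖T (x n)‖ ≤ ‖T‖ * ‖x n‖ := T.le_opNorm _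
      _ = ‖T‖ := by rw [hx n, mul_one]
    exact tendsto_of_tendsto_of_tendsto_of_le_of_le h1 tendsto_const_nhds
      (fun n => (hlow n).le) h2
  have hTlim : Tendsto (fun n => y n (T (x n))) atTop (𝓝 (‖T‖ : 𝕜)) := by
    have : Tendsto (fun n => ((‖T (x n)‖ : ℝ) : 𝕜)) atTop (𝓝 (‖T‖ : 𝕜)) :=
      (RCLike.continuous_ofReal.tendsto _).comp hnormlim
    convert this using 1
    funext n; rw [hxy n]
  obtain ⟨φ, hφ, lam, hmem, -⟩ := omset_subseq T A x y hx hy hTlim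
  exact ⟨lam, hmem⟩

/-- If `0 ∈ Ω(T,A)` then `T ⊥_B A`. -/
lemma orth_of_zero_mem {T A : X →L[𝕜] Y} (h : (0:𝕜) ∈ OmSet T A) (lam : 𝕜) :
    ‖T‖ ≤ ‖T + lam • A‖ := by
  obtain ⟨x, y, hx, hy, h1, h2⟩ := h
  have hlim : Tendsto (fun n => ‖y n ((T + lam • A) (x n))‖) atTop (𝓝 ‖T‖) := by
    have h3 : Tendsto (fun n => y n (T (x n)) + lam * y n (A (x n))) atTop
        (𝓝 ((‖T‖:𝕜) + lam * 0)) := h1.add (h2.const_mul lam)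
    have heq : ∀ n, y n ((T + lam • A) (x n)) =
        y n (T (x n)) + lam * y n (A (x n)) := by
      intro n
      simp [ContinuousLinearMap.add_apply, ContinuousLinearMap.smul_apply, smul_eq_mul]
    simp only [heq]
    simpa using h3.norm
  refine le_of_tendsto hlim (Eventually.of_forall fun n => ?_)
  calc ‖y n ((T + lam • A) (x n))‖ ≤ ‖y n‖ * ‖(T + lam • A) (x n)‖ := (y n).le_opNorm _
  _ = ‖(T + lam • A) (x n)‖ := by rw [hy n, one_mul]
  _ ≤ ‖T + lam • A‖ * ‖x n‖ := (T + lam • A).le_opNorm _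
  _ = ‖T + lam • A‖ := by rw [hx n, mul_one]

lemma zero_mem_shift {T A : X →L[𝕜] Y} (hT : T ≠ 0) {lam : 𝕜} (h : lam ∈ OmSet T A) :
    (0:𝕜) ∈ OmSet T (A - (lam / (‖T‖:𝕜)) • T) := by
  obtain ⟨x, y, hx, hy, h1, h2⟩ := h
  refine ⟨x, y, hx, hy, h1, ?_⟩
  have hTn : ((‖T‖:ℝ) : 𝕜) ≠ 0 := by
    exact_mod_cast RCLike.ofReal_ne_zero.mpr (norm_ne_zero_iff.mpr hT)
  have h3 : Tendsto (fun n => y n (A (x n)) - (lam/(‖T‖:𝕜)) * y n (T (x n))) atTop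
      (𝓝 (lam - (lam/(‖T‖:𝕜)) * (‖T‖:𝕜))) := h2.sub (h1.const_mul _)
  have hz : lam - (lam/(‖T‖:𝕜)) * (‖T‖:𝕜) = 0 := by
    rw [div_mul_cancel₀ _ hTn, sub_self]
  rw [hz] at h3
  convert h3 using 2 with n
  simp [ContinuousLinearMap.sub_apply, ContinuousLinearMap.smul_apply, smul_eq_mul]

/-- If `T ⊥_B A`, then for every `ν` some `lam ∈ Ω(T,A)` has `0 ≤ re (ν * lam)`. -/
lemma exists_nonneg_re {T A : X →L[𝕜] Y} (hT : T ≠ 0)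
    (horth : ∀ lam : 𝕜, ‖T‖ ≤ ‖T + lam • A‖) (ν : 𝕜) :
    ∃ lam ∈ OmSet T A, 0 ≤ RCLike.re (ν * lam) := by
  have hTp : (0:ℝ) < ‖T‖ := norm_pos_iff.mpr hT
  set t : ℕ → ℝ := fun n => min (Real.sqrt ‖T‖ / 2) (1/(n+1)) with ht_def
  have htpos : ∀ n, 0 < t n := fun n => lt_min (by positivity) (by positivity)
  have htlim : Tendsto t atTop (𝓝 0) :=
    squeeze_zero (fun n => (htpos n).le) (fun n => min_le_right _ _)
      tendsto_one_div_add_atTop_nhds_zero_nat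
  have htsq : ∀ n, (t n)^2 < ‖T‖ := by
    intro n
    have h1 : t n ≤ Real.sqrt ‖T‖ / 2 := min_le_left _ _
    have h2 : (Real.sqrt ‖T‖ / 2)^2 = ‖T‖/4 := by
      rw [div_pow, Real.sq_sqrt hTp.le]; norm_num
    nlinarith [(htpos n).le]
  set S : ℕ → (X →L[𝕜] Y) := fun n => T + (((t n : ℝ):𝕜) * ν) • A with hS_def
  have key : ∀ n, ∃ (x : X) (g : Y →L[𝕜] 𝕜), ‖x‖ = 1 ∧ ‖g‖ = 1 ∧
      g (S n x) = (‖S n x‖ : 𝕜) ∧ ‖T‖ - (t n)^2 < ‖S n x‖ := by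
    intro n
    have hSn : ‖T‖ ≤ ‖S n‖ := horth _
    obtain ⟨x, hx1, hx2⟩ := exists_unit_lt_apply (S n) (c := ‖T‖ - (t n)^2)
      (by have := htsq n; linarith) (lt_of_lt_of_le (by nlinarith [pow_pos (htpos n) 2]) hSn)
    have hSx : S n x ≠ 0 := by
      intro h
      rw [h, norm_zero] at hx2
      have := htsq n; linarith
    obtain ⟨g, hg1, hg2⟩ := exists_dual_vector 𝕜 (S n x) (norm_ne_zero_iff.mpr hSx)
    exact ⟨x, g, hx1, hg1, hg2, hx2⟩
  choose x y hx hy hxy hlow using key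
  -- basic identities
  have happ : ∀ n, y n (S n (x n)) = y n (T (x n)) + ((t n : ℝ):𝕜) * (ν * y n (A (x n))) := by
    intro n
    simp [hS_def, ContinuousLinearMap.add_apply, ContinuousLinearMap.smul_apply, smul_eq_mul,
      mul_assoc]
  have hAbd : ∀ n, ‖y n (A (x n))‖ ≤ ‖A‖ := by
    intro n
    calc ‖y n (A (x n))‖ ≤ ‖y n‖ * ‖A (x n)‖ := (y n).le_opNorm _
    _ = ‖A (x n)‖ := by rw [hy n, one_mul]
    _ ≤ ‖A‖ * ‖x n‖ := A.le_opNorm _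
    _ = ‖A‖ := by rw [hx n, mul_one]
  have hTbd : ∀ n, ‖y n (T (x n))‖ ≤ ‖T‖ := by
    intro n
    calc ‖y n (T (x n))‖ ≤ ‖y n‖ * ‖T (x n)‖ := (y n).le_opNorm _
    _ = ‖T (x n)‖ := by rw [hy n, one_mul]
    _ ≤ ‖T‖ * ‖x n‖ := T.le_opNorm _
    _ = ‖T‖ := by rw [hx n, mul_one]
  -- lower bound on re of y n (T (x n))
  have hre : ∀ n, ‖T‖ - (t n)^2 - t n * (‖ν‖ * ‖A‖) ≤ RCLike.re (y n (T (x n))) := by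
    intro n
    have e1 : RCLike.re (y n (T (x n))) =
        ‖S n (x n)‖ - t n * RCLike.re (ν * y n (A (x n))) := by
      have := happ n
      have e2 : y n (T (x n)) = y n (S n (x n)) - ((t n : ℝ):𝕜) * (ν * y n (A (x n))) := by
        rw [this]; ring
      rw [e2, map_sub, hxy n, RCLike.ofReal_re, RCLike.re_ofReal_mul]
    rw [e1]
    have e3 : |RCLike.re (ν * y n (A (x n)))| ≤ ‖ν‖ * ‖A‖ := by
      refine (RCLike.abs_re_le_norm _).trans ?_
      rw [norm_mul]
      exact mul_le_mul_of_nonneg_left (hAbd n) (norm_nonneg ν)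
    have e4 := abs_le.mp e3
    have e5 := (hlow n).le
    have e6 := (htpos n).le
    nlinarith [e4.1, e4.2]
  -- re(ν * y n (A (x n))) ≥ - t n
  have hre2 : ∀ n, -(t n) ≤ RCLike.re (ν * y n (A (x n))) := by
    intro n
    have e1 : t n * RCLike.re (ν * y n (A (x n))) =
        ‖S n (x n)‖ - RCLike.re (y n (T (x n))) := by
      have e2 : y n (T (x n)) = y n (S n (x n)) - ((t n : ℝ):𝕜) * (ν * y n (A (x n))) := by
        rw [happ n]; ring
      rw [e2, map_sub, hxy n, RCLike.ofReal_re, RCLike.re_ofReal_mul]; ring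
    have e5 := (hlow n).le
    have e6 : RCLike.re (y n (T (x n))) ≤ ‖T‖ :=
      (RCLike.re_le_norm _).trans (hTbd n)
    have e7 : -(t n)^2 ≤ t n * RCLike.re (ν * y n (A (x n))) := by rw [e1]; linarith
    nlinarith [htpos n]
  -- convergence of y n (T (x n)) to ‖T‖
  have hTlim : Tendsto (fun n => y n (T (x n))) atTop (𝓝 (‖T‖ : 𝕜)) := by
    rw [tendsto_iff_norm_sub_tendsto_zero]
    have hb : ∀ n, ‖y n (T (x n)) - (‖T‖:𝕜)‖ ≤
        Real.sqrt (2*‖T‖*((t n)^2 + t n * (‖ν‖ * ‖A‖))) := by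
      intro n
      rw [← Real.sqrt_sq (norm_nonneg _)]
      apply Real.sqrt_le_sqrt
      have e1 : ‖y n (T (x n)) - (‖T‖:𝕜)‖^2 =
          RCLike.re (y n (T (x n)) - (‖T‖:𝕜)) * RCLike.re (y n (T (x n)) - (‖T‖:𝕜)) +
          RCLike.im (y n (T (x n)) - (‖T‖:𝕜)) * RCLike.im (y n (T (x n)) - (‖T‖:𝕜)) :=
        RCLike.norm_sq_eq_def
      have e2 : ‖y n (T (x n))‖^2 =
          RCLike.re (y n (T (x n))) * RCLike.re (y n (T (x n))) +
          RCLike.im (y n (T (x n))) * RCLike.im (y n (T (x n))) := RCLike.norm_sq_eq_def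
      rw [e1, map_sub, map_sub, RCLike.ofReal_re, RCLike.ofReal_im]
      have e3 := hTbd n
      have e4 := hre n
      have e5 : ‖y n (T (x n))‖^2 ≤ ‖T‖^2 := by nlinarith [norm_nonneg (y n (T (x n)))]
      nlinarith [e2, e4]
    refine squeeze_zero (fun n => norm_nonneg _) hb ?_
    have : Tendsto (fun n => 2*‖T‖*((t n)^2 + t n * (‖ν‖ * ‖A‖))) atTop
        (𝓝 (2*‖T‖*((0:ℝ)^2 + 0 * (‖ν‖ * ‖A‖)))) :=
      ((htlim.pow 2).add (htlim.mul_const _)).const_mul _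
    simpa using this.sqrt
  -- extract subsequence
  obtain ⟨φ, hφ, lam, hmem, hlim2⟩ := omset_subseq T A x y hx hy hTlim
  refine ⟨lam, hmem, ?_⟩
  have h8 : Tendsto (fun n => RCLike.re (ν * y (φ n) (A (x (φ n))))) atTop
      (𝓝 (RCLike.re (ν * lam))) :=
    (RCLike.continuous_re.tendsto _).comp (hlim2.const_mul ν)
  have h9 : Tendsto (fun n => -(t (φ n))) atTop (𝓝 (-(0:ℝ))) :=
    (htlim.comp hφ.tendsto_atTop).neg
  have h10 := le_of_tendsto_of_tendsto' h9 h8 (fun n => hre2 (φ n))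
  simpa using h10

end Aux


theorem stmt10 {𝕜 X Y : Type*} [RCLike 𝕜] [NormedAddCommGroup X] [NormedSpace 𝕜 X]
    [NormedAddCommGroup Y] [NormedSpace 𝕜 Y] (T : X →L[𝕜] Y) (hT : T ≠ 0) :
    (∀ A₁ A₂ : X →L[𝕜] Y, (∀ lam : 𝕜, ‖T‖ ≤ ‖T + lam • A₁‖) →
      (∀ lam : 𝕜, ‖T‖ ≤ ‖T + lam • A₂‖) → (∀ lam : 𝕜, ‖T‖ ≤ ‖T + lam • (A₁ + A₂)‖)) ↔
    (∀ A : X →L[𝕜] Y, ∃ lam₀ : 𝕜,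
      {lam : 𝕜 | ∃ (x : ℕ → X) (y : ℕ → (Y →L[𝕜] 𝕜)),
        (∀ n, ‖x n‖ = 1) ∧ (∀ n, ‖y n‖ = 1) ∧
        Tendsto (fun n => y n (T (x n))) atTop (𝓝 (‖T‖ : 𝕜)) ∧
        Tendsto (fun n => y n (A (x n))) atTop (𝓝 lam)} = {lam₀}) := by
  have hTn : ((‖T‖:ℝ):𝕜) ≠ 0 := RCLike.ofReal_ne_zero.mpr (norm_ne_zero_iff.mpr hT)
  constructor
  · intro hadd A
    obtain ⟨lam₁, hmem₁⟩ := omset_nonempty T A hT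
    refine ⟨lam₁, ?_⟩
    show OmSet T A = {lam₁}
    apply Set.eq_singleton_iff_unique_mem.mpr
    refine ⟨hmem₁, fun lam₂ hmem₂ => ?_⟩
    by_contra hne
    set B₁ := A - (lam₁/(‖T‖:𝕜)) • T with hB₁
    set B₂ := -(A - (lam₂/(‖T‖:𝕜)) • T) with hB₂
    have h₁ : ∀ lam : 𝕜, ‖T‖ ≤ ‖T + lam • B₁‖ :=
      fun lam => orth_of_zero_mem (zero_mem_shift hT hmem₁) lam
    have h₂ : ∀ lam : 𝕜, ‖T‖ ≤ ‖T + lam • B₂‖ := by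
      intro lam
      have h := orth_of_zero_mem (zero_mem_shift hT hmem₂) (-lam)
      rw [hB₂, smul_neg, ← neg_smul]
      exact h
    have h₃ := hadd B₁ B₂ h₁ h₂
    have hB : B₁ + B₂ = ((lam₂ - lam₁)/(‖T‖:𝕜)) • T := by
      rw [hB₁, hB₂, sub_div, sub_smul]
      abel
    set d : 𝕜 := (lam₂ - lam₁)/(‖T‖:𝕜) with hd_def
    have hd : d ≠ 0 := div_ne_zero (sub_ne_zero.mpr hne) hTn
    have h4 := h₃ (-d⁻¹)
    rw [hB] at h4
    have hzero : T + (-d⁻¹) • (d • T) = 0 := by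
      rw [smul_smul, neg_mul, inv_mul_cancel₀ hd, neg_smul, one_smul]
      abel
    rw [hzero, norm_zero] at h4
    exact absurd h4 (not_le.mpr (norm_pos_iff.mpr hT))
  · intro hsing A₁ A₂ h₁ h₂
    obtain ⟨l₁, hl₁⟩ := hsing A₁
    obtain ⟨l₂, hl₂⟩ := hsing A₂
    obtain ⟨l, hl⟩ := hsing (A₁ + A₂)
    have hl₁' : OmSet T A₁ = {l₁} := hl₁
    have hl₂' : OmSet T A₂ = {l₂} := hl₂
    have hl' : OmSet T (A₁ + A₂) = {l} := hl
    have hz : ∀ (A : X →L[𝕜] Y) (l : 𝕜), OmSet T A = {l} →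
        (∀ lam : 𝕜, ‖T‖ ≤ ‖T + lam • A‖) → l = 0 := by
      intro A l hA horth
      obtain ⟨lam, hmem, hre⟩ := exists_nonneg_re hT horth (-(starRingEnd 𝕜 l))
      rw [hA, Set.mem_singleton_iff] at hmem
      subst hmem
      rw [neg_mul, map_neg, RCLike.conj_mul, ← RCLike.ofReal_pow, RCLike.ofReal_re] at hre
      have hl0 : ‖lam‖ = 0 := by nlinarith [norm_nonneg lam]
      exact norm_eq_zero.mp hl0
    have hz₁ := hz A₁ l₁ hl₁' h₁
    have hz₂ := hz A₂ l₂ hl₂' h₂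
    have hmem : l ∈ OmSet T (A₁ + A₂) := by rw [hl']; exact Set.mem_singleton l
    obtain ⟨x, y, hx, hy, hTl, hAl⟩ := hmem
    obtain ⟨φ, hφ, lam', hmem', hlim'⟩ := omset_subseq T A₁ x y hx hy hTl
    have hlam' : lam' = 0 := by
      rw [hl₁', Set.mem_singleton_iff] at hmem'
      rw [hmem', hz₁]
    rw [hlam'] at hlim'
    have hsum : Tendsto (fun n => y (φ n) ((A₁ + A₂) (x (φ n)))) atTop (𝓝 l) := by
      have := hAl.comp hφ.tendsto_atTop
      simpa [Function.comp_def] using this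
    have h2lim : Tendsto (fun n => y (φ n) (A₂ (x (φ n)))) atTop (𝓝 l) := by
      have heq : ∀ n, y (φ n) (A₂ (x (φ n))) =
          y (φ n) ((A₁ + A₂) (x (φ n))) - y (φ n) (A₁ (x (φ n))) := by
        intro n
        simp [ContinuousLinearMap.add_apply]
      simp only [heq]
      simpa using hsum.sub hlim'
    have hmem2 : l ∈ OmSet T A₂ :=
      ⟨x ∘ φ, y ∘ φ, fun n => hx _, fun n => hy _, hTl.comp hφ.tendsto_atTop, h2lim⟩
    rw [hl₂', Set.mem_singleton_iff] at hmem2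
    have hl0 : l = 0 := by rw [hmem2, hz₂]
    intro lam
    apply orth_of_zero_mem
    rw [hl']
    rw [← hl0]
    exact Set.mem_singleton l
end

section
/- Let X_1, …, X_k, Y be normed linear spaces and T a nonzero bounded k-linear map. Then T is smooth if and only if Ω(T,A) is a singleton for every bounded k-linear map A, where Ω(T,A) := { λ : ∃ sequences (x⃗ₙ) in S_{X_1} × ⋯ × S_{X_k} and (yₙ*) in S_{Y*} with yₙ*(T x⃗ₙ) → ‖T‖ and yₙ*(A x⃗ₙ) → λ }. -/
open Filter Topology

section aux
variable {𝕜 : Type*} [RCLike 𝕜] {k : ℕ} {X : Fin k → Type*}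
    [∀ i, NormedAddCommGroup (X i)] [∀ i, NormedSpace 𝕜 (X i)]
    {Y : Type*} [NormedAddCommGroup Y] [NormedSpace 𝕜 Y]

/-- membership in Ω(T,A) -/
def OmegaMem (T A : ContinuousMultilinearMap 𝕜 X Y) (lam : 𝕜) : Prop :=
  ∃ (x : ℕ → ∀ i, X i) (y : ℕ → (Y →L[𝕜] 𝕜)),
    (∀ n i, ‖x n i‖ = 1) ∧ (∀ n, ‖y n‖ = 1) ∧
    Tendsto (fun n => y n (T (x n))) atTop (𝓝 (‖T‖ : 𝕜)) ∧
    Tendsto (fun n => y n (A (x n))) atTop (𝓝 lam)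

lemma opNorm_le_of_unit (S : ContinuousMultilinearMap 𝕜 X Y) {c : ℝ} (h0 : 0 ≤ c)
    (h : ∀ x : ∀ i, X i, (∀ i, ‖x i‖ = 1) → ‖S x‖ ≤ c) : ‖S‖ ≤ c := by
  rw [ContinuousMultilinearMap.opNorm_le_iff h0]
  intro m
  by_cases hz : ∃ i, m i = 0
  · obtain ⟨i, hi⟩ := hz
    rw [S.map_coord_zero i hi]
    simp only [norm_zero]
    positivity
  · push_neg at hz
    set u : ∀ i, X i := fun i => ((‖m i‖ : 𝕜))⁻¹ • m i with hu
    have hui : ∀ i, ‖u i‖ = 1 := by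
      intro i
      have hmi : ‖m i‖ ≠ 0 := norm_ne_zero_iff.2 (hz i)
      rw [hu]
      simp only [norm_smul, norm_inv, RCLike.norm_ofReal, abs_of_nonneg (norm_nonneg (m i))]
      field_simp
    have hm : m = fun i => (‖m i‖ : 𝕜) • u i := by
      funext i
      have hmi : (‖m i‖ : 𝕜) ≠ 0 := by
        simpa using norm_ne_zero_iff.2 (hz i)
      rw [hu, smul_smul, mul_inv_cancel₀ hmi, one_smul]
    calc ‖S m‖ = ‖(∏ i, (‖m i‖ : 𝕜)) • S u‖ := by
          conv_lhs => rw [hm]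
          rw [S.map_smul_univ]
      _ = (∏ i, ‖m i‖) * ‖S u‖ := by
          rw [norm_smul, norm_prod]
          congr 1
          exact Finset.prod_congr rfl fun i _ => by
            rw [RCLike.norm_ofReal, abs_of_nonneg (norm_nonneg _)]
      _ ≤ (∏ i, ‖m i‖) * c :=
          mul_le_mul_of_nonneg_left (h u hui)
            (Finset.prod_nonneg fun i _ => norm_nonneg _)
      _ = c * ∏ i, ‖m i‖ := mul_comm _ _

lemma attain (v : Y) (hv : v ≠ 0) (hu : ∀ i, ∃ u : X i, ‖u‖ = 1)
    (S : ContinuousMultilinearMap 𝕜 X Y) {ε : ℝ} (hε : 0 < ε) :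
    ∃ (x : ∀ i, X i) (y : Y →L[𝕜] 𝕜), (∀ i, ‖x i‖ = 1) ∧ ‖y‖ = 1 ∧
      y (S x) = (‖S x‖ : 𝕜) ∧ ‖S‖ - ε ≤ ‖S x‖ := by
  have hx : ∃ x : ∀ i, X i, (∀ i, ‖x i‖ = 1) ∧ ‖S‖ - ε ≤ ‖S x‖ := by
    by_contra hcon
    push_neg at hcon
    choose u hu' using hu
    have h0 : 0 ≤ ‖S‖ - ε := le_of_lt (lt_of_le_of_lt (norm_nonneg _) (hcon u hu'))
    have := opNorm_le_of_unit S h0 fun x hx => le_of_lt (hcon x hx)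
    linarith
  obtain ⟨x, hx1, hx2⟩ := hx
  by_cases hSx : S x = 0
  · obtain ⟨g, hg1, _⟩ := exists_dual_vector 𝕜 v (norm_ne_zero_iff.2 hv)
    exact ⟨x, g, hx1, hg1, by rw [hSx]; simp, hx2⟩
  · obtain ⟨g, hg1, hg2⟩ := exists_dual_vector 𝕜 (S x) (norm_ne_zero_iff.2 hSx)
    exact ⟨x, g, hx1, hg1, hg2, hx2⟩

lemma norm_apply_le (B : ContinuousMultilinearMap 𝕜 X Y) {x : ∀ i, X i} {y : Y →L[𝕜] 𝕜}
    (hx : ∀ i, ‖x i‖ = 1) (hy : ‖y‖ = 1) : ‖y (B x)‖ ≤ ‖B‖ := by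
  calc ‖y (B x)‖ ≤ ‖y‖ * ‖B x‖ := y.le_opNorm _
    _ ≤ 1 * (‖B‖ * ∏ i, ‖x i‖) := by
        rw [hy]; gcongr; exact B.le_opNorm x
    _ = ‖B‖ := by
        rw [one_mul, Finset.prod_congr rfl fun i _ => hx i, Finset.prod_const_one, mul_one]

lemma extract (B : ContinuousMultilinearMap 𝕜 X Y) {x : ℕ → ∀ i, X i} {y : ℕ → (Y →L[𝕜] 𝕜)}
    (hx : ∀ n i, ‖x n i‖ = 1) (hy : ∀ n, ‖y n‖ = 1) :
    ∃ (lam : 𝕜) (φ : ℕ → ℕ), StrictMono φ ∧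
      Tendsto (fun n => y (φ n) (B (x (φ n)))) atTop (𝓝 lam) := by
  obtain ⟨a, _, φ, hφ, hconv⟩ := tendsto_subseq_of_bounded
    (Metric.isBounded_closedBall (x := (0 : 𝕜)) (r := ‖B‖))
    (x := fun n => y n (B (x n)))
    (fun n => by rw [Metric.mem_closedBall, dist_zero_right]; exact norm_apply_le B (hx n) (hy n))
  exact ⟨a, φ, hφ, hconv⟩

lemma tendsto_of_re {z : ℕ → 𝕜} {M : ℝ} (hb : ∀ n, ‖z n‖ ≤ M)
    (hre : Tendsto (fun n => RCLike.re (z n)) atTop (𝓝 M)) :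
    Tendsto z atTop (𝓝 (M : 𝕜)) := by
  rw [tendsto_iff_norm_sub_tendsto_zero]
  have key : ∀ n, ‖z n - (M : 𝕜)‖ ≤ Real.sqrt (2 * M * (M - RCLike.re (z n))) := by
    intro n
    have h1 : ‖z n - (M : 𝕜)‖ ^ 2 ≤ 2 * M * (M - RCLike.re (z n)) := by
      have e1 : ‖z n - (M : 𝕜)‖ ^ 2 = RCLike.re (z n - (M:𝕜)) * RCLike.re (z n - (M:𝕜))
          + RCLike.im (z n - (M:𝕜)) * RCLike.im (z n - (M:𝕜)) := RCLike.norm_sq_eq_def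
      have e2 : ‖z n‖ ^ 2 = RCLike.re (z n) * RCLike.re (z n)
          + RCLike.im (z n) * RCLike.im (z n) := RCLike.norm_sq_eq_def
      have e3 : ‖z n‖ ^ 2 ≤ M ^ 2 := by
        have := hb n
        nlinarith [norm_nonneg (z n)]
      simp only [map_sub, RCLike.ofReal_re, RCLike.ofReal_im, sub_zero] at e1
      nlinarith
    calc ‖z n - (M : 𝕜)‖ = Real.sqrt (‖z n - (M : 𝕜)‖ ^ 2) := by
          rw [Real.sqrt_sq (norm_nonneg _)]
      _ ≤ Real.sqrt (2 * M * (M - RCLike.re (z n))) := Real.sqrt_le_sqrt h1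
  have hlim : Tendsto (fun n => Real.sqrt (2 * M * (M - RCLike.re (z n)))) atTop (𝓝 0) := by
    have h1 : Tendsto (fun n => 2 * M * (M - RCLike.re (z n))) atTop (𝓝 (2 * M * (M - M))) :=
      tendsto_const_nhds.mul (tendsto_const_nhds.sub hre)
    simp only [sub_self, mul_zero] at h1
    have := h1.sqrt
    rwa [Real.sqrt_zero] at this
  exact squeeze_zero (fun n => norm_nonneg _) key hlim

lemma omega_lower {T A : ContinuousMultilinearMap 𝕜 X Y} {lam : 𝕜}
    (h : OmegaMem T A lam) (c : 𝕜) : ‖T‖ + RCLike.re (c * lam) ≤ ‖T + c • A‖ := by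
  obtain ⟨x, y, hx, hy, hT, hA⟩ := h
  have key : ∀ n, RCLike.re (y n (T (x n)) + c * y n (A (x n))) ≤ ‖T + c • A‖ := by
    intro n
    have h1 : y n (T (x n)) + c * y n (A (x n)) = y n ((T + c • A) (x n)) := by
      simp [smul_eq_mul, mul_comm]
    rw [h1]
    calc RCLike.re (y n ((T + c • A) (x n))) ≤ ‖y n ((T + c • A) (x n))‖ := RCLike.re_le_norm _
      _ ≤ ‖T + c • A‖ := norm_apply_le _ (hx n) (hy n)
  have hlim : Tendsto (fun n => RCLike.re (y n (T (x n)) + c * y n (A (x n)))) atTop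
      (𝓝 (RCLike.re ((‖T‖ : 𝕜) + c * lam))) :=
    (RCLike.continuous_re.tendsto _).comp (hT.add (tendsto_const_nhds.mul hA))
  have := le_of_tendsto hlim (Eventually.of_forall key)
  simpa using this

lemma subseq_mem {T A : ContinuousMultilinearMap 𝕜 X Y} {x : ℕ → ∀ i, X i}
    {y : ℕ → (Y →L[𝕜] 𝕜)} {lam : 𝕜} {φ : ℕ → ℕ} (hφ : StrictMono φ)
    (hx : ∀ n i, ‖x n i‖ = 1) (hy : ∀ n, ‖y n‖ = 1)
    (hT : Tendsto (fun n => y n (T (x n))) atTop (𝓝 (‖T‖ : 𝕜)))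
    (hA : Tendsto (fun n => y (φ n) (A (x (φ n)))) atTop (𝓝 lam)) : OmegaMem T A lam :=
  ⟨fun n => x (φ n), fun n => y (φ n), fun n => hx (φ n), fun n => hy (φ n),
    hT.comp hφ.tendsto_atTop, hA⟩

lemma units_of_ne_zero {T : ContinuousMultilinearMap 𝕜 X Y} (hT : T ≠ 0) :
    (∃ v : Y, v ≠ 0) ∧ (∀ i, ∃ u : X i, ‖u‖ = 1) := by
  have : ∃ m : ∀ i, X i, T m ≠ 0 := by
    by_contra hcon
    push_neg at hcon
    exact hT (ContinuousMultilinearMap.ext fun m => by rw [hcon m]; rfl)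
  obtain ⟨m, hm⟩ := this
  refine ⟨⟨T m, hm⟩, fun i => ?_⟩
  have hmi : m i ≠ 0 := fun h => hm (T.map_coord_zero i h)
  have hmi' : ‖m i‖ ≠ 0 := norm_ne_zero_iff.2 hmi
  refine ⟨((‖m i‖ : 𝕜))⁻¹ • m i, ?_⟩
  simp only [norm_smul, norm_inv, RCLike.norm_ofReal, abs_of_nonneg (norm_nonneg (m i))]
  field_simp

lemma omega_nonempty {T : ContinuousMultilinearMap 𝕜 X Y} (hT : T ≠ 0)
    (A : ContinuousMultilinearMap 𝕜 X Y) : ∃ lam, OmegaMem T A lam := by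
  obtain ⟨⟨v, hv⟩, hu⟩ := units_of_ne_zero hT
  have hex : ∀ n : ℕ, ∃ (x : ∀ i, X i) (y : Y →L[𝕜] 𝕜), (∀ i, ‖x i‖ = 1) ∧ ‖y‖ = 1 ∧
      y (T x) = (‖T x‖ : 𝕜) ∧ ‖T‖ - 1 / (n + 1) ≤ ‖T x‖ :=
    fun n => attain v hv hu T (by positivity)
  choose x y hx hy hval hlow using hex
  have hTlim : Tendsto (fun n => y n (T (x n))) atTop (𝓝 ((‖T‖ : 𝕜))) := by
    have hr : Tendsto (fun n => ‖T (x n)‖) atTop (𝓝 ‖T‖) := by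
      refine tendsto_of_tendsto_of_tendsto_of_le_of_le (g := fun n : ℕ => ‖T‖ - 1 / (n + 1))
        (h := fun _ => ‖T‖) ?_ tendsto_const_nhds hlow ?_
      · have : Tendsto (fun n : ℕ => 1 / ((n : ℝ) + 1)) atTop (𝓝 0) := tendsto_one_div_add_atTop_nhds_zero_nat
        have h2 := tendsto_const_nhds (x := ‖T‖) (f := atTop (α := ℕ)).sub this
        simpa using h2
      · intro n
        calc ‖T (x n)‖ ≤ ‖T‖ * ∏ i, ‖x n i‖ := T.le_opNorm _
          _ = ‖T‖ := by
            rw [Finset.prod_congr rfl fun i _ => hx n i, Finset.prod_const_one, mul_one]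
    have : Tendsto (fun n => ((‖T (x n)‖ : ℝ) : 𝕜)) atTop (𝓝 ((‖T‖ : 𝕜))) :=
      (RCLike.continuous_ofReal.tendsto _).comp hr
    refine this.congr fun n => (hval n).symm
  obtain ⟨lam, φ, hφ, hconv⟩ := extract A hx hy
  exact ⟨lam, subseq_mem hφ hx hy hTlim hconv⟩

lemma sum_split {T A₁ A₂ : ContinuousMultilinearMap 𝕜 X Y} {lam : 𝕜}
    (h : OmegaMem T (A₁ + A₂) lam) :
    ∃ lam₁, OmegaMem T A₁ lam₁ ∧ OmegaMem T A₂ (lam - lam₁) := by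
  obtain ⟨x, y, hx, hy, hT, hA⟩ := h
  obtain ⟨lam₁, φ, hφ, hconv⟩ := extract A₁ hx hy
  refine ⟨lam₁, subseq_mem hφ hx hy hT hconv, subseq_mem hφ hx hy hT ?_⟩
  have hsum : Tendsto (fun n => y (φ n) ((A₁ + A₂) (x (φ n)))) atTop (𝓝 lam) :=
    hA.comp hφ.tendsto_atTop
  have := hsum.sub hconv
  refine this.congr fun n => ?_
  simp [map_add]

lemma orth_unique_zero {T A : ContinuousMultilinearMap 𝕜 X Y} (hT : T ≠ 0)
    (horth : ∀ lam : 𝕜, ‖T‖ ≤ ‖T + lam • A‖)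
    {lam₀ : 𝕜} (huniq : ∀ lam, OmegaMem T A lam → lam = lam₀) : lam₀ = 0 := by
  by_contra h0
  obtain ⟨⟨v, hv⟩, hu⟩ := units_of_ne_zero hT
  set μ : 𝕜 := -(starRingEnd 𝕜) lam₀ with hμ
  set t : ℕ → ℝ := fun n => 1 / (n + 1) with ht
  have htpos : ∀ n, 0 < t n := fun n => by positivity
  have htlim : Tendsto t atTop (𝓝 0) := tendsto_one_div_add_atTop_nhds_zero_nat
  set c : ℕ → 𝕜 := fun n => (t n : 𝕜) * μ with hc
  have hex : ∀ n : ℕ, ∃ (x : ∀ i, X i) (y : Y →L[𝕜] 𝕜), (∀ i, ‖x i‖ = 1) ∧ ‖y‖ = 1 ∧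
      y ((T + c n • A) x) = (‖(T + c n • A) x‖ : 𝕜) ∧
      ‖T + c n • A‖ - (t n) ^ 2 ≤ ‖(T + c n • A) x‖ :=
    fun n => attain v hv hu _ (by have := htpos n; positivity)
  choose x y hx hy hval hlow using hex
  set p : ℕ → 𝕜 := fun n => y n (T (x n)) with hp
  set q : ℕ → 𝕜 := fun n => y n (A (x n)) with hq
  have hsplit : ∀ n, p n + c n * q n = ((‖(T + c n • A) (x n)‖ : ℝ) : 𝕜) := by
    intro n
    rw [← hval n]
    simp [hp, hq, smul_eq_mul, mul_comm]
  have hqb : ∀ n, ‖q n‖ ≤ ‖A‖ := fun n => norm_apply_le A (hx n) (hy n)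
  have hpb : ∀ n, ‖p n‖ ≤ ‖T‖ := fun n => norm_apply_le T (hx n) (hy n)
  have hTle : ∀ n, ‖T‖ ≤ ‖T + c n • A‖ := fun n => horth (c n)
  have hrecq : ∀ n, RCLike.re (c n * q n) = t n * RCLike.re (μ * q n) := by
    intro n
    rw [hc]
    simp only [mul_assoc]
    exact RCLike.re_ofReal_mul _ _
  have hcqb : ∀ n, ‖c n * q n‖ ≤ t n * (‖μ‖ * ‖A‖) := by
    intro n
    have h1 : ‖c n * q n‖ = t n * ‖μ‖ * ‖q n‖ := by
      show ‖(t n : 𝕜) * μ * q n‖ = _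
      rw [norm_mul, norm_mul, RCLike.norm_ofReal, abs_of_pos (htpos n)]
    calc ‖c n * q n‖ = t n * ‖μ‖ * ‖q n‖ := h1
      _ ≤ t n * ‖μ‖ * ‖A‖ :=
        mul_le_mul_of_nonneg_left (hqb n) (mul_nonneg (htpos n).le (norm_nonneg μ))
      _ = t n * (‖μ‖ * ‖A‖) := mul_assoc _ _ _
  have hrep_eq : ∀ n, RCLike.re (p n) = ‖(T + c n • A) (x n)‖ - RCLike.re (c n * q n) := by
    intro n
    have := congrArg RCLike.re (hsplit n)
    simp only [map_add, RCLike.ofReal_re] at this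
    linarith
  have hrep_low : ∀ n, ‖T‖ - (t n) ^ 2 - t n * (‖μ‖ * ‖A‖) ≤ RCLike.re (p n) := by
    intro n
    have h1 := hlow n
    have h2 := hTle n
    have h3 : RCLike.re (c n * q n) ≤ t n * (‖μ‖ * ‖A‖) :=
      le_trans (RCLike.re_le_norm _) (hcqb n)
    rw [hrep_eq n]
    linarith
  have hrep_hi : ∀ n, RCLike.re (p n) ≤ ‖T‖ :=
    fun n => le_trans (RCLike.re_le_norm _) (hpb n)
  have hreplim : Tendsto (fun n => RCLike.re (p n)) atTop (𝓝 ‖T‖) := by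
    refine tendsto_of_tendsto_of_tendsto_of_le_of_le
      (g := fun n => ‖T‖ - (t n) ^ 2 - t n * (‖μ‖ * ‖A‖)) (h := fun _ => ‖T‖)
      ?_ tendsto_const_nhds hrep_low hrep_hi
    have h1 : Tendsto (fun n => ‖T‖ - (t n) ^ 2 - t n * (‖μ‖ * ‖A‖)) atTop
        (𝓝 (‖T‖ - 0 ^ 2 - 0 * (‖μ‖ * ‖A‖))) :=
      (tendsto_const_nhds.sub (htlim.pow 2)).sub (htlim.mul tendsto_const_nhds)
    simpa using h1
  have hplim : Tendsto p atTop (𝓝 ((‖T‖ : ℝ) : 𝕜)) := tendsto_of_re hpb hreplim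
  have hlower2 : ∀ n, -(t n) ≤ RCLike.re (μ * q n) := by
    intro n
    have h1 : ‖T + c n • A‖ ≤ ‖(T + c n • A) (x n)‖ + (t n) ^ 2 := by
      have := hlow n; linarith
    have h2 := hTle n
    have h3 := hrep_hi n
    have h4 := hrep_eq n
    have h5 := hrecq n
    have h6 := htpos n
    nlinarith [hrecq n]
  obtain ⟨lam, φ, hφ, hconv⟩ := extract A hx hy
  have hmem : OmegaMem T A lam := subseq_mem hφ hx hy hplim hconv
  have hlam : lam = lam₀ := huniq lam hmem
  have hlim2 : Tendsto (fun n => RCLike.re (μ * q (φ n))) atTop (𝓝 (RCLike.re (μ * lam₀))) := by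
    rw [← hlam]
    exact (RCLike.continuous_re.tendsto _).comp (tendsto_const_nhds.mul hconv)
  have hlim3 : Tendsto (fun n => -(t (φ n))) atTop (𝓝 0) := by
    have := (htlim.comp hφ.tendsto_atTop).neg
    simpa using this
  have hge : (0 : ℝ) ≤ RCLike.re (μ * lam₀) :=
    le_of_tendsto_of_tendsto' hlim3 hlim2 fun n => hlower2 (φ n)
  have hval2 : μ * lam₀ = -((‖lam₀‖ : ℝ) : 𝕜) ^ 2 := by
    rw [hμ, neg_mul, RCLike.conj_mul]
  have hre : RCLike.re (μ * lam₀) = -(‖lam₀‖ ^ 2) := by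
    rw [hval2, map_neg, ← RCLike.ofReal_pow, RCLike.ofReal_re]
  rw [hre] at hge
  have hnorm : 0 < ‖lam₀‖ := norm_pos_iff.2 h0
  nlinarith

end aux

theorem stmt11 {𝕜 : Type*} [RCLike 𝕜] {k : ℕ} {X : Fin k → Type*}
    [∀ i, NormedAddCommGroup (X i)] [∀ i, NormedSpace 𝕜 (X i)]
    {Y : Type*} [NormedAddCommGroup Y] [NormedSpace 𝕜 Y]
    (T : ContinuousMultilinearMap 𝕜 X Y) (hT : T ≠ 0) :
    (∀ A₁ A₂ : ContinuousMultilinearMap 𝕜 X Y, (∀ lam : 𝕜, ‖T‖ ≤ ‖T + lam • A₁‖) →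
      (∀ lam : 𝕜, ‖T‖ ≤ ‖T + lam • A₂‖) → (∀ lam : 𝕜, ‖T‖ ≤ ‖T + lam • (A₁ + A₂)‖)) ↔
    (∀ A : ContinuousMultilinearMap 𝕜 X Y, ∃ lam₀ : 𝕜,
      {lam : 𝕜 | ∃ (x : ℕ → ∀ i, X i) (y : ℕ → (Y →L[𝕜] 𝕜)),
        (∀ n i, ‖x n i‖ = 1) ∧ (∀ n, ‖y n‖ = 1) ∧
        Tendsto (fun n => y n (T (x n))) atTop (𝓝 (‖T‖ : 𝕜)) ∧
        Tendsto (fun n => y n (A (x n))) atTop (𝓝 lam)} = {lam₀}) := by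
  have hTpos : (0:ℝ) < ‖T‖ := norm_pos_iff.2 hT
  have hTne : ((‖T‖ : ℝ) : 𝕜) ≠ 0 := by
    simp only [ne_eq, RCLike.ofReal_eq_zero]
    exact ne_of_gt hTpos
  constructor
  · intro h A
    obtain ⟨lam, hlam⟩ := omega_nonempty hT A
    have huniq : ∀ z, OmegaMem T A z → z = lam := by
      intro z hz
      by_contra hne
      set c₁ : 𝕜 := z / ((‖T‖ : ℝ) : 𝕜) with hc₁
      set c₂ : 𝕜 := lam / ((‖T‖ : ℝ) : 𝕜) with hc₂
      set A₁ := A - c₁ • T with hA₁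
      set A₂ := c₂ • T - A with hA₂
      have hm₁ : OmegaMem T A₁ 0 := by
        obtain ⟨x, y, hx, hy, hTt, hAt⟩ := hz
        refine ⟨x, y, hx, hy, hTt, ?_⟩
        have h1 : Tendsto (fun n => y n (A (x n)) - c₁ * y n (T (x n))) atTop
            (𝓝 (z - c₁ * ((‖T‖:ℝ):𝕜))) := hAt.sub (tendsto_const_nhds.mul hTt)
        have he : z - c₁ * ((‖T‖:ℝ):𝕜) = 0 := by
          rw [hc₁, div_mul_cancel₀ _ hTne, sub_self]
        rw [he] at h1
        refine h1.congr fun n => ?_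
        simp [hA₁, smul_eq_mul, mul_comm]
      have hm₂ : OmegaMem T A₂ 0 := by
        obtain ⟨x, y, hx, hy, hTt, hAt⟩ := hlam
        refine ⟨x, y, hx, hy, hTt, ?_⟩
        have h1 : Tendsto (fun n => c₂ * y n (T (x n)) - y n (A (x n))) atTop
            (𝓝 (c₂ * ((‖T‖:ℝ):𝕜) - lam)) := (tendsto_const_nhds.mul hTt).sub hAt
        have he : c₂ * ((‖T‖:ℝ):𝕜) - lam = 0 := by
          rw [hc₂, div_mul_cancel₀ _ hTne, sub_self]
        rw [he] at h1
        refine h1.congr fun n => ?_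
        simp [hA₂, smul_eq_mul, mul_comm]
      have horth₁ : ∀ d : 𝕜, ‖T‖ ≤ ‖T + d • A₁‖ := fun d => by
        have := omega_lower hm₁ d; simpa using this
      have horth₂ : ∀ d : 𝕜, ‖T‖ ≤ ‖T + d • A₂‖ := fun d => by
        have := omega_lower hm₂ d; simpa using this
      have hcne : c₂ - c₁ ≠ 0 := by
        rw [hc₂, hc₁, div_sub_div_same]
        exact div_ne_zero (sub_ne_zero.2 fun hcon => hne hcon.symm) hTne
      have hsum : A₁ + A₂ = (c₂ - c₁) • T := by
        rw [hA₁, hA₂, sub_smul]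
        abel
      have hfin := h A₁ A₂ horth₁ horth₂ (-(c₂ - c₁)⁻¹)
      rw [hsum, smul_smul, neg_mul, inv_mul_cancel₀ hcne] at hfin
      simp only [neg_smul, one_smul, add_neg_cancel, norm_zero] at hfin
      linarith
    exact ⟨lam, Set.eq_singleton_iff_unique_mem.2 ⟨hlam, huniq⟩⟩
  · intro h A₁ A₂ h₁ h₂ lam
    obtain ⟨c₁, hc₁⟩ := h A₁
    obtain ⟨c₂, hc₂⟩ := h A₂
    have hu₁ : ∀ z : 𝕜, OmegaMem T A₁ z → z = c₁ := fun z hz => (Set.ext_iff.1 hc₁ z).1 hz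
    have hu₂ : ∀ z : 𝕜, OmegaMem T A₂ z → z = c₂ := fun z hz => (Set.ext_iff.1 hc₂ z).1 hz
    have hz₁ : c₁ = 0 := orth_unique_zero hT h₁ hu₁
    have hz₂ : c₂ = 0 := orth_unique_zero hT h₂ hu₂
    obtain ⟨lam₀, hmem⟩ := omega_nonempty hT (A₁ + A₂)
    obtain ⟨l₁, hl₁, hl₂⟩ := sum_split hmem
    have e1 : l₁ = 0 := (hu₁ l₁ hl₁).trans hz₁
    have e2 : lam₀ - l₁ = 0 := (hu₂ _ hl₂).trans hz₂
    have e3 : lam₀ = 0 := by rw [e1, sub_zero] at e2; exact e2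
    rw [e3] at hmem
    have := omega_lower hmem lam
    simpa using this
end

section
/- Let X_1, …, X_k, Y be normed linear spaces and T a nonzero smooth bounded k-linear map. Then for any two members ((x⃗ₙ, yₙ*)) and ((z⃗ₙ, wₙ*)) of M_T (sequences in the product of unit spheres times S_{Y*} with yₙ*(T x⃗ₙ) → ‖T‖ and wₙ*(T z⃗ₙ) → ‖T‖) and any bounded k-linear map A, both limits lim yₙ*(A x⃗ₙ) and lim wₙ*(A z⃗ₙ) exist and are equal. -/
open Filter Topology

-- orthogonality from vanishing
lemma orth_of_vanish {𝕜 : Type*} [RCLike 𝕜] {k : ℕ} {X : Fin k → Type*}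
    [∀ i, NormedAddCommGroup (X i)] [∀ i, NormedSpace 𝕜 (X i)]
    {Y : Type*} [NormedAddCommGroup Y] [NormedSpace 𝕜 Y]
    (T C : ContinuousMultilinearMap 𝕜 X Y)
    (u : ℕ → ∀ i, X i) (v : ℕ → (Y →L[𝕜] 𝕜))
    (hu : ∀ n i, ‖u n i‖ = 1) (hv : ∀ n, ‖v n‖ = 1)
    (h1 : Tendsto (fun n => v n (T (u n))) atTop (𝓝 (‖T‖ : 𝕜)))
    (h2 : Tendsto (fun n => v n (C (u n))) atTop (𝓝 (0 : 𝕜))) :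
    ∀ lam : 𝕜, ‖T‖ ≤ ‖T + lam • C‖ := by
  intro lam
  have hten : Tendsto (fun n => ‖v n (T (u n)) + lam * v n (C (u n))‖) atTop
      (𝓝 ‖(‖T‖ : 𝕜) + lam * 0‖) :=
    (Tendsto.add h1 (h2.const_mul lam)).norm
  rw [mul_zero, add_zero] at hten
  have hnormT : ‖(‖T‖ : 𝕜)‖ = ‖T‖ := by
    rw [RCLike.norm_ofReal, abs_of_nonneg (norm_nonneg T)]
  rw [hnormT] at hten
  refine le_of_tendsto hten (Eventually.of_forall fun n => ?_)
  have heq : v n (T (u n)) + lam * v n (C (u n)) = v n ((T + lam • C) (u n)) := by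
    simp [map_add, map_smul, smul_eq_mul]
  rw [heq]
  calc ‖v n ((T + lam • C) (u n))‖ ≤ ‖v n‖ * ‖(T + lam • C) (u n)‖ :=
        (v n).le_opNorm _
    _ ≤ 1 * (‖T + lam • C‖ * ∏ i, ‖u n i‖) := by
        rw [hv n]; gcongr; exact (T + lam • C).le_opNorm _
    _ = ‖T + lam • C‖ := by simp [hu n]

lemma eq_of_two_limits {𝕜 : Type*} [RCLike 𝕜] {k : ℕ} {X : Fin k → Type*}
    [∀ i, NormedAddCommGroup (X i)] [∀ i, NormedSpace 𝕜 (X i)]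
    {Y : Type*} [NormedAddCommGroup Y] [NormedSpace 𝕜 Y]
    (T : ContinuousMultilinearMap 𝕜 X Y) (hT : T ≠ 0)
    (hsmooth : ∀ A₁ A₂ : ContinuousMultilinearMap 𝕜 X Y,
      (∀ lam : 𝕜, ‖T‖ ≤ ‖T + lam • A₁‖) → (∀ lam : 𝕜, ‖T‖ ≤ ‖T + lam • A₂‖) →
      (∀ lam : 𝕜, ‖T‖ ≤ ‖T + lam • (A₁ + A₂)‖))
    (A : ContinuousMultilinearMap 𝕜 X Y)
    (u u' : ℕ → ∀ i, X i) (v v' : ℕ → (Y →L[𝕜] 𝕜))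
    (hu : ∀ n i, ‖u n i‖ = 1) (hv : ∀ n, ‖v n‖ = 1)
    (hu' : ∀ n i, ‖u' n i‖ = 1) (hv' : ∀ n, ‖v' n‖ = 1)
    (h1 : Tendsto (fun n => v n (T (u n))) atTop (𝓝 (‖T‖ : 𝕜)))
    (h1' : Tendsto (fun n => v' n (T (u' n))) atTop (𝓝 (‖T‖ : 𝕜)))
    {a b : 𝕜}
    (ha : Tendsto (fun n => v n (A (u n))) atTop (𝓝 a))
    (hb : Tendsto (fun n => v' n (A (u' n))) atTop (𝓝 b)) : a = b := by
  have hTpos : (0:ℝ) < ‖T‖ := norm_pos_iff.mpr hT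
  have hTne : (‖T‖ : 𝕜) ≠ 0 := by
    simpa using ne_of_gt hTpos
  set B₁ : ContinuousMultilinearMap 𝕜 X Y := A - (a / ‖T‖) • T with hB₁
  set B₂ : ContinuousMultilinearMap 𝕜 X Y := A - (b / ‖T‖) • T with hB₂
  have orth1 : ∀ lam : 𝕜, ‖T‖ ≤ ‖T + lam • B₁‖ := by
    apply orth_of_vanish T B₁ u v hu hv h1
    have : Tendsto (fun n => v n (A (u n)) - (a / ‖T‖) * v n (T (u n))) atTop
        (𝓝 (a - (a / ‖T‖) * ‖T‖)) := ha.sub (h1.const_mul _)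
    rw [div_mul_cancel₀ a hTne, sub_self] at this
    convert this using 2 with n
    simp [hB₁, map_sub, map_smul, smul_eq_mul]
  have orth2 : ∀ lam : 𝕜, ‖T‖ ≤ ‖T + lam • B₂‖ := by
    apply orth_of_vanish T B₂ u' v' hu' hv' h1'
    have : Tendsto (fun n => v' n (A (u' n)) - (b / ‖T‖) * v' n (T (u' n))) atTop
        (𝓝 (b - (b / ‖T‖) * ‖T‖)) := hb.sub (h1'.const_mul _)
    rw [div_mul_cancel₀ b hTne, sub_self] at this
    convert this using 2 with n
    simp [hB₂, map_sub, map_smul, smul_eq_mul]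
  have orth2' : ∀ lam : 𝕜, ‖T‖ ≤ ‖T + lam • ((-1 : 𝕜) • B₂)‖ := by
    intro lam
    rw [smul_smul]
    exact orth2 (lam * (-1))
  have horth := hsmooth B₁ ((-1 : 𝕜) • B₂) orth1 orth2'
  have hBsum : B₁ + (-1 : 𝕜) • B₂ = ((b - a) / ‖T‖) • T := by
    rw [hB₁, hB₂]
    ext m
    simp [sub_smul, div_eq_mul_inv, sub_mul]
  rw [hBsum] at horth
  by_contra hne
  have hμ : (b - a) / (‖T‖ : 𝕜) ≠ 0 :=
    div_ne_zero (sub_ne_zero.mpr (Ne.symm hne)) hTne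
  have := horth (-((b - a) / (‖T‖ : 𝕜))⁻¹)
  rw [smul_smul, neg_mul, inv_mul_cancel₀ hμ] at this
  rw [neg_one_smul, add_neg_cancel, norm_zero] at this
  exact absurd this (not_le.mpr hTpos)

theorem stmt12 {𝕜 : Type*} [RCLike 𝕜] {k : ℕ} {X : Fin k → Type*}
    [∀ i, NormedAddCommGroup (X i)] [∀ i, NormedSpace 𝕜 (X i)]
    {Y : Type*} [NormedAddCommGroup Y] [NormedSpace 𝕜 Y]
    (T : ContinuousMultilinearMap 𝕜 X Y) (hT : T ≠ 0)
    (hsmooth : ∀ A₁ A₂ : ContinuousMultilinearMap 𝕜 X Y,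
      (∀ lam : 𝕜, ‖T‖ ≤ ‖T + lam • A₁‖) → (∀ lam : 𝕜, ‖T‖ ≤ ‖T + lam • A₂‖) →
      (∀ lam : 𝕜, ‖T‖ ≤ ‖T + lam • (A₁ + A₂)‖))
    (x z : ℕ → ∀ i, X i) (y w : ℕ → (Y →L[𝕜] 𝕜))
    (hx : ∀ n i, ‖x n i‖ = 1) (hy : ∀ n, ‖y n‖ = 1)
    (hz : ∀ n i, ‖z n i‖ = 1) (hw : ∀ n, ‖w n‖ = 1)
    (hxy : Tendsto (fun n => y n (T (x n))) atTop (𝓝 (‖T‖ : 𝕜)))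
    (hzw : Tendsto (fun n => w n (T (z n))) atTop (𝓝 (‖T‖ : 𝕜)))
    (A : ContinuousMultilinearMap 𝕜 X Y) :
    ∃ lam : 𝕜, Tendsto (fun n => y n (A (x n))) atTop (𝓝 lam) ∧
      Tendsto (fun n => w n (A (z n))) atTop (𝓝 lam) := by
  -- general convergence lemma for one sequence
  have key : ∀ (u : ℕ → ∀ i, X i) (v : ℕ → (Y →L[𝕜] 𝕜)),
      (∀ n i, ‖u n i‖ = 1) → (∀ n, ‖v n‖ = 1) →
      Tendsto (fun n => v n (T (u n))) atTop (𝓝 (‖T‖ : 𝕜)) →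
      ∃ a : 𝕜, Tendsto (fun n => v n (A (u n))) atTop (𝓝 a) := by
    intro u v hu hv h1
    have hbdd : ∀ n, (fun n => v n (A (u n))) n ∈ Metric.closedBall (0:𝕜) ‖A‖ := by
      intro n
      rw [Metric.mem_closedBall, dist_zero_right]
      calc ‖v n (A (u n))‖ ≤ ‖v n‖ * ‖A (u n)‖ := (v n).le_opNorm _
        _ ≤ 1 * (‖A‖ * ∏ i, ‖u n i‖) := by rw [hv n]; gcongr; exact A.le_opNorm _
        _ = ‖A‖ := by simp [hu n]
    obtain ⟨a, -, φ, hφ, hφa⟩ :=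
      tendsto_subseq_of_bounded Metric.isBounded_closedBall hbdd
    refine ⟨a, ?_⟩
    by_contra hcon
    rw [Metric.tendsto_atTop] at hcon
    push_neg at hcon
    obtain ⟨ε, hε, hfreq⟩ := hcon
    have hfreq' : ∃ᶠ n in atTop, ε ≤ dist (v n (A (u n))) a := by
      rw [frequently_atTop]
      intro N
      obtain ⟨n, hn, hdn⟩ := hfreq N
      exact ⟨n, hn, hdn⟩
    obtain ⟨ψ, hψ, hψd⟩ := extraction_of_frequently_atTop hfreq'
    obtain ⟨a', -, ρ, hρ, hρa⟩ := tendsto_subseq_of_bounded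
      Metric.isBounded_closedBall (fun n => hbdd (ψ n))
    have haa' : a' = a := by
      refine eq_of_two_limits T hT hsmooth A (u ∘ (ψ ∘ ρ)) (u ∘ φ) (v ∘ (ψ ∘ ρ)) (v ∘ φ)
        (fun n i => hu _ i) (fun n => hv _) (fun n i => hu _ i) (fun n => hv _)
        (h1.comp ((hψ.comp hρ).tendsto_atTop)) (h1.comp hφ.tendsto_atTop)
        ?_ hφa
      exact hρa
    have : Tendsto (fun n => dist (v (ψ (ρ n)) (A (u (ψ (ρ n))))) a) atTop (𝓝 (dist a' a)) := by
      exact (hρa.dist tendsto_const_nhds)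
    rw [haa', dist_self] at this
    have hεle : ε ≤ 0 := ge_of_tendsto this (Eventually.of_forall fun n => hψd (ρ n))
    linarith
  obtain ⟨a, ha⟩ := key x y hx hy hxy
  obtain ⟨b, hb⟩ := key z w hz hw hzw
  have hab : a = b := eq_of_two_limits T hT hsmooth A x z y w hx hy hz hw hxy hzw ha hb
  exact ⟨a, ha, hab ▸ hb⟩
end

section
/- Let Y be a normed linear space with a semi-inner-product [·,·] compatible with the norm, and let T, A be nonzero bounded k-linear maps into Y with ‖T‖ = 1. If T is smooth and T ⊥_B A, then for any sequence (x⃗ₙ) in the product of unit spheres with ‖T x⃗ₙ‖ → 1 and any sequence of semi-inner-products ([·,·]ₙ) on Y, one has [A x⃗ₙ, T x⃗ₙ]ₙ → 0. -/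
open Filter Topology

/-- A semi-inner-product (in the sense of Giles-Lumer) on a normed space `Y`,
compatible with the norm. -/
structure SIP (𝕜 Y : Type*) [RCLike 𝕜] [NormedAddCommGroup Y] [NormedSpace 𝕜 Y] where
  toFun : Y → Y → 𝕜
  add_left : ∀ x y z, toFun (x + y) z = toFun x z + toFun y z
  smul_left : ∀ (a : 𝕜) (x z : Y), toFun (a • x) z = a * toFun x z
  smul_right : ∀ (a : 𝕜) (x z : Y), toFun x (a • z) = starRingEnd 𝕜 a * toFun x z
  norm_compat : ∀ x, toFun x x = (‖x‖ : 𝕜) ^ 2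
  cauchy_schwarz : ∀ x z, ‖toFun x z‖ ≤ ‖x‖ * ‖z‖

theorem stmt13 {𝕜 : Type*} [RCLike 𝕜] {k : ℕ} {X : Fin k → Type*}
    [∀ i, NormedAddCommGroup (X i)] [∀ i, NormedSpace 𝕜 (X i)]
    {Y : Type*} [NormedAddCommGroup Y] [NormedSpace 𝕜 Y]
    (T A : ContinuousMultilinearMap 𝕜 X Y) (hTnorm : ‖T‖ = 1) (hA : A ≠ 0)
    (hsmooth : ∀ A₁ A₂ : ContinuousMultilinearMap 𝕜 X Y,
      (∀ lam : 𝕜, ‖T‖ ≤ ‖T + lam • A₁‖) → (∀ lam : 𝕜, ‖T‖ ≤ ‖T + lam • A₂‖) →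
      (∀ lam : 𝕜, ‖T‖ ≤ ‖T + lam • (A₁ + A₂)‖))
    (horth : ∀ lam : 𝕜, ‖T‖ ≤ ‖T + lam • A‖)
    (x : ℕ → ∀ i, X i) (hx : ∀ n i, ‖x n i‖ = 1)
    (hTx : Tendsto (fun n => ‖T (x n)‖) atTop (𝓝 (1 : ℝ)))
    (sip : ℕ → SIP 𝕜 Y) :
    Tendsto (fun n => (sip n).toFun (A (x n)) (T (x n))) atTop (𝓝 (0 : 𝕜)) := by
  classical
  -- norms of B (x n) are at most ‖B‖
  have hxle : ∀ (B : ContinuousMultilinearMap 𝕜 X Y) (n : ℕ), ‖B (x n)‖ ≤ ‖B‖ := by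
    intro B n
    have := B.le_opNorm (x n)
    simpa [Finset.prod_eq_one (fun i _ => hx n i)] using this
  have hTle : ∀ n, ‖T (x n)‖ ≤ 1 := fun n => hTnorm ▸ hxle T n
  -- the functionals f n : B ↦ [B xₙ, T xₙ]ₙ
  have key : ∀ n, ∃ f : StrongDual 𝕜 (ContinuousMultilinearMap 𝕜 X Y), ‖f‖ ≤ 1 ∧
      (∀ B : ContinuousMultilinearMap 𝕜 X Y, f B = (sip n).toFun (B (x n)) (T (x n))) := by
    intro n
    refine ⟨LinearMap.mkContinuous
      ({ toFun := fun B : ContinuousMultilinearMap 𝕜 X Y => (sip n).toFun (B (x n)) (T (x n))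
         map_add' := by intro B C; simpa using (sip n).add_left (B (x n)) (C (x n)) (T (x n))
         map_smul' := by intro a B; simpa using (sip n).smul_left a (B (x n)) (T (x n)) } :
        ContinuousMultilinearMap 𝕜 X Y →ₗ[𝕜] 𝕜)
      1 ?_, ?_, fun B => rfl⟩
    · intro B
      calc ‖(sip n).toFun (B (x n)) (T (x n))‖ ≤ ‖B (x n)‖ * ‖T (x n)‖ :=
            (sip n).cauchy_schwarz _ _
        _ ≤ ‖B‖ * 1 := mul_le_mul (hxle B n) (hTle n) (norm_nonneg _) (norm_nonneg _)
        _ = 1 * ‖B‖ := by ring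
    · exact LinearMap.mkContinuous_norm_le _ zero_le_one _
  choose f hf1 hfB using key
  -- any norm-one support functional at T kills A
  have hkill : ∀ g : StrongDual 𝕜 (ContinuousMultilinearMap 𝕜 X Y),
      ‖g‖ ≤ 1 → g T = 1 → g A = 0 := by
    intro g hg hgT
    by_contra hb
    set b := g A with hbdef
    have orth2 : ∀ lam : 𝕜, ‖T‖ ≤ ‖T + lam • (b • T - A)‖ := by
      intro lam
      have hval : g (T + lam • (b • T - A)) = 1 := by
        simp only [map_add, map_smul, map_sub, hgT, smul_eq_mul, ← hbdef]
        ring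
      have h1 : (1 : ℝ) ≤ ‖T + lam • (b • T - A)‖ := by
        have := g.le_opNorm (T + lam • (b • T - A))
        rw [hval] at this
        simp only [norm_one] at this
        nlinarith [norm_nonneg (T + lam • (b • T - A)), this,
          mul_le_mul_of_nonneg_right hg (norm_nonneg (T + lam • (b • T - A)))]
      simpa [hTnorm] using h1
    have hfin := hsmooth A (b • T - A) horth orth2 (-b⁻¹)
    rw [add_sub_cancel] at hfin
    have hz : T + (-b⁻¹) • b • T = 0 := by
      rw [smul_smul]
      have hb1 : (-b⁻¹) * b = -1 := by field_simp
      rw [hb1]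
      simp
    rw [hz] at hfin
    simp [hTnorm] at hfin
    linarith
  -- the sequence [T xₙ, T xₙ]ₙ tends to 1
  have hfT : Tendsto (fun n => f n T) atTop (𝓝 (1 : 𝕜)) := by
    have h1 := (RCLike.continuous_ofReal (K := 𝕜)).tendsto (1 : ℝ)
    have h2 := (h1.comp hTx).pow 2
    simp only [Function.comp, RCLike.ofReal_one, one_pow] at h2
    have heq : (fun n => f n T) = fun n => ((‖T (x n)‖ : 𝕜)) ^ 2 :=
      funext fun n => by rw [hfB, (sip n).norm_compat]
    rw [heq]
    exact h2
  -- main argument by contradiction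
  by_contra hcon
  have hfA : ∀ n, f n A = (sip n).toFun (A (x n)) (T (x n)) := fun n => hfB n A
  rw [Metric.tendsto_atTop] at hcon
  push_neg at hcon
  obtain ⟨ε, hε, hfreq⟩ := hcon
  set c : ℕ → 𝕜 := fun n => (sip n).toFun (A (x n)) (T (x n)) with hc
  have hfreq' : ∃ᶠ n in atTop, ε ≤ ‖c n‖ := by
    rw [frequently_atTop]
    intro N
    obtain ⟨n, hn, hd⟩ := hfreq N
    exact ⟨n, hn, by simpa [dist_eq_norm] using hd⟩
  set L : Filter ℕ := atTop ⊓ 𝓟 {n | ε ≤ ‖c n‖} with hL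
  haveI hLne : L.NeBot := Filter.frequently_iff_neBot.mp hfreq'
  -- Banach-Alaoglu: cluster point in the weak-* compact unit ball
  have hcomp : IsCompact (WeakDual.toStrongDual ⁻¹'
      Metric.closedBall (0 : StrongDual 𝕜 (ContinuousMultilinearMap 𝕜 X Y)) 1) :=
    WeakDual.isCompact_closedBall (𝕜 := 𝕜) 0 1
  set Φ : ℕ → WeakDual 𝕜 (ContinuousMultilinearMap 𝕜 X Y) :=
    fun n => StrongDual.toWeakDual (f n) with hΦ
  have hmem : ∀ n, Φ n ∈ WeakDual.toStrongDual ⁻¹'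
      Metric.closedBall (0 : StrongDual 𝕜 (ContinuousMultilinearMap 𝕜 X Y)) 1 := by
    intro n
    simp only [Set.mem_preimage, Metric.mem_closedBall, dist_zero_right]
    exact (mem_closedBall_zero_iff (E := StrongDual 𝕜 (ContinuousMultilinearMap 𝕜 X Y)) (a := f n) (r := 1)).mpr (hf1 n)
  have hle : Filter.map Φ L ≤ Filter.principal (WeakDual.toStrongDual ⁻¹'
      Metric.closedBall (0 : StrongDual 𝕜 (ContinuousMultilinearMap 𝕜 X Y)) 1) := by
    rw [Filter.le_principal_iff, Filter.mem_map]
    exact Filter.univ_mem' hmem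
  obtain ⟨g, hgmem, hgcl⟩ := hcomp.exists_clusterPt hle
  -- evaluate the cluster point at T and A
  have hevalT : ClusterPt (g T) (Filter.map (fun n => f n T) L) := by
    have hcont : ContinuousAt (fun h : WeakDual 𝕜 (ContinuousMultilinearMap 𝕜 X Y) => h T) g :=
      (WeakDual.eval_continuous T).continuousAt
    have := hgcl.map hcont
      (Filter.tendsto_map (f := fun h : WeakDual 𝕜 (ContinuousMultilinearMap 𝕜 X Y) => h T))
    simpa [Filter.map_map, hΦ, Function.comp_def] using this
  have hevalA : ClusterPt (g A) (Filter.map (fun n => f n A) L) := by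
    have hcont : ContinuousAt (fun h : WeakDual 𝕜 (ContinuousMultilinearMap 𝕜 X Y) => h A) g :=
      (WeakDual.eval_continuous A).continuousAt
    have := hgcl.map hcont
      (Filter.tendsto_map (f := fun h : WeakDual 𝕜 (ContinuousMultilinearMap 𝕜 X Y) => h A))
    simpa [Filter.map_map, hΦ, Function.comp_def] using this
  -- g T = 1
  have hgT : g T = 1 := by
    have hfTL : Tendsto (fun n => f n T) L (𝓝 (1 : 𝕜)) := hfT.mono_left inf_le_left
    have hcl1 : ClusterPt (g T) (𝓝 (1 : 𝕜)) := hevalT.mono hfTL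
    exact eq_of_nhds_neBot hcl1
  -- ‖g A‖ ≥ ε
  have hgA : ε ≤ ‖g A‖ := by
    have hsub : Filter.map (fun n => f n A) L ≤ Filter.principal {z : 𝕜 | ε ≤ ‖z‖} := by
      rw [Filter.le_principal_iff, Filter.mem_map]
      have hmem' : {n | ε ≤ ‖c n‖} ∈ L := by
        rw [hL]
        exact Filter.mem_inf_of_right (Filter.mem_principal_self _)
      filter_upwards [hmem'] with n hn
      simpa [hfA n] using hn
    have hclosed : IsClosed {z : 𝕜 | ε ≤ ‖z‖} := by
      have : {z : 𝕜 | ε ≤ ‖z‖} = (fun z : 𝕜 => ‖z‖) ⁻¹' Set.Ici ε := rfl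
      rw [this]
      exact isClosed_Ici.preimage continuous_norm
    have hmemcl : g A ∈ closure {z : 𝕜 | ε ≤ ‖z‖} :=
      mem_closure_iff_clusterPt.mpr (hevalA.mono hsub)
    rwa [hclosed.closure_eq] at hmemcl
  -- contradiction via hkill
  have hgnorm : ‖WeakDual.toStrongDual g‖ ≤ 1 := by
    exact (mem_closedBall_zero_iff (E := StrongDual 𝕜 (ContinuousMultilinearMap 𝕜 X Y)) (a := WeakDual.toStrongDual g) (r := 1)).mp hgmem
  have hzero : g A = 0 := hkill (WeakDual.toStrongDual g) hgnorm hgT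
  rw [hzero] at hgA
  simp at hgA
  linarith
end
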